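/- arXiv:1506.07379 — 3 statements merged into one kernel-verified Lean document; each statement's English description precedes it below -/
import Mathlib

section
/- Let f(x) = a_0 x^n + a_1 x^{n-1} + ... + a_n be a real polynomial of degree n and let M be an integer with 2 ≤ M ≤ n. If all the leading coefficients h_0, h_1, ..., h_n of the polynomials f_0, f_1, ..., f_n obtained by applying the generalized Euclidean algorithm with step M to f are positive, then every complex zero z of f satisfies |arg z| > π/M. -/
open Polynomial

/-- The arithmetic part `f_j` of the polynomial with coefficients `a_0,...,a_n`:
`f_j(x) = Σ_{0 ≤ l ≤ n, l ≡ j (mod M)} a_l x^(n-l)`. -/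
noncomputable def geaInit (a : ℕ → ℝ) (n M j : ℕ) : Polynomial ℝ :=
  ∑ l ∈ Finset.range (n + 1), if l % M = j then C (a l) * X ^ (n - l) else 0

/-- The polynomials `f_0, f_1, ..., f_n` of the generalized Euclidean algorithm with step `M`:
`f_i = d_i f_{i+1} + f_{i+M}` where `d_i`, `f_{i+M}` are quotient and remainder of the
division of `f_i` by `f_{i+1}` (with `d_i = 0`, `f_{i+M} = f_i` when `deg f_i < deg f_{i+1}`
or `f_{i+1} = 0`, as Euclidean division of polynomials indeed provides). -/
noncomputable def gea (a : ℕ → ℝ) (n M : ℕ) : ℕ → Polynomial ℝ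
  | i =>
    if _h : i < M then geaInit a n M i
    else if _h2 : 2 ≤ M then
      gea a n M (i - M) % gea a n M (i - M + 1)
    else 0
  termination_by i => i
  decreasing_by all_goals omega

section GEAhelpers
open Complex

lemma reMulExp (r x : ℝ) : ((r:ℂ) * Complex.exp ((x:ℝ) * I)).re = r * Real.cos x := by
  simp [Complex.mul_re, Complex.exp_ofReal_mul_I_re, Complex.exp_ofReal_mul_I_im]

lemma expShift (m r x : ℝ) :
    Complex.exp (-(m:ℂ) * I) * ((r:ℂ) * Complex.exp ((x:ℝ) * I))
      = (r:ℂ) * Complex.exp (((x - m : ℝ):ℂ) * I) := by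
  rw [mul_comm, mul_assoc, ← Complex.exp_add]
  push_cast
  ring_nf

lemma rep_sum_two {r₁ r₂ : ℝ} (h₁ : 0 ≤ r₁) (h₂ : 0 ≤ r₂) {α β : ℝ}
    (hab : α ≤ β) (hπ : β - α ≤ Real.pi) {u : ℂ}
    (hu : u = (r₁ : ℂ) * Complex.exp ((α:ℝ) * I) + (r₂ : ℂ) * Complex.exp ((β:ℝ) * I))
    (hu0 : u ≠ 0) :
    ∃ δ, α ≤ δ ∧ δ ≤ β ∧ u = (‖u‖ : ℂ) * Complex.exp ((δ:ℝ) * I) := by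
  set m : ℝ := (α + β)/2 with hm
  set hw : ℝ := (β - α)/2 with hhw
  have hw0 : 0 ≤ hw := by simp only [hhw]; linarith
  have hwpi : hw ≤ Real.pi/2 := by simp only [hhw]; linarith
  set w : ℂ := Complex.exp (-(m:ℂ) * I) * u with hwdef
  have hαm : α - m = -hw := by simp only [hm, hhw]; ring
  have hβm : β - m = hw := by simp only [hm, hhw]; ring
  have hrew : w = (r₁:ℂ) * Complex.exp ((-hw : ℝ) * I) + (r₂:ℂ) * Complex.exp ((hw:ℝ) * I) := by
    rw [hwdef, hu, mul_add, expShift, expShift, hαm, hβm]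
  have hwre : w.re = (r₁ + r₂) * Real.cos hw := by
    rw [hrew, Complex.add_re, reMulExp, reMulExp, Real.cos_neg]; ring
  have habsw : ‖w‖ = ‖u‖ := by
    rw [hwdef, norm_mul]
    have : (-(m:ℂ) * I) = ((-m : ℝ):ℂ) * I := by push_cast; ring
    rw [this, Complex.norm_exp_ofReal_mul_I, one_mul]
  have habsu : ‖u‖ ≤ r₁ + r₂ := by
    rw [hu]
    refine le_trans (norm_add_le _ _) ?_
    rw [norm_mul, norm_mul, Complex.norm_exp_ofReal_mul_I, Complex.norm_exp_ofReal_mul_I,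
      Complex.norm_real, Complex.norm_real, Real.norm_eq_abs, Real.norm_eq_abs, _root_.abs_of_nonneg h₁, _root_.abs_of_nonneg h₂]
    simp
  have hw0' : w ≠ 0 := mul_ne_zero (Complex.exp_ne_zero _) hu0
  have habspos : 0 < ‖w‖ := by
    simpa [norm_pos_iff] using hw0'
  have hcosnn : 0 ≤ Real.cos hw := Real.cos_nonneg_of_mem_Icc ⟨by linarith, hwpi⟩
  have hcosarg : Real.cos hw ≤ Real.cos w.arg := by
    rw [Complex.cos_arg hw0', le_div_iff₀ habspos, hwre, habsw]
    calc Real.cos hw * ‖u‖ ≤ Real.cos hw * (r₁ + r₂) :=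
          mul_le_mul_of_nonneg_left habsu hcosnn
      _ = (r₁ + r₂) * Real.cos hw := by ring
  have hargle : |w.arg| ≤ hw := by
    by_contra hcon
    push_neg at hcon
    have h2 := Real.cos_lt_cos_of_nonneg_of_le_pi hw0 (Complex.abs_arg_le_pi w) hcon
    rw [Real.cos_abs] at h2
    linarith
  refine ⟨m + w.arg, ?_, ?_, ?_⟩
  · have := (abs_le.mp hargle).1; linarith
  · have := (abs_le.mp hargle).2; linarith
  · have h1 : u = Complex.exp ((m:ℂ) * I) * w := by
      rw [hwdef, ← mul_assoc, ← Complex.exp_add]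
      have : (m:ℂ) * I + -(m:ℂ) * I = 0 := by ring
      rw [this, Complex.exp_zero, one_mul]
    have hxp : ∀ (A a : ℝ), (A:ℂ) * Complex.exp (((m + a : ℝ):ℂ) * I)
        = Complex.exp ((m:ℂ)*I) * ((A:ℂ) * Complex.exp ((a:ℝ)*I)) := by
      intro A a
      rw [mul_comm (Complex.exp ((m:ℂ)*I)), mul_assoc, ← Complex.exp_add]
      push_cast
      ring_nf
    have h2 : (↑(‖u‖):ℂ) * Complex.exp ((↑(m + w.arg):ℂ) * I)
        = Complex.exp ((m:ℂ)*I) * w := by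
      rw [hxp, ← habsw, Complex.norm_mul_exp_arg_mul_I]
    exact h1.trans h2.symm

lemma rep_of_nonneg {x : ℂ} {t a : ℝ} (ht : 0 ≤ t) (hx : x = (t:ℂ) * Complex.exp ((a:ℝ) * I)) :
    x = (‖x‖ : ℂ) * Complex.exp ((a:ℝ) * I) := by
  have : ‖x‖ = t := by
    rw [hx, norm_mul, Complex.norm_exp_ofReal_mul_I, Complex.norm_real, Real.norm_eq_abs, _root_.abs_of_nonneg ht,
      mul_one]
  rw [this, ← hx]

lemma pow_rep (z : ℂ) (k : ℕ) :
    z ^ k = ((‖z‖ ^ k : ℝ) : ℂ) * Complex.exp ((((k:ℝ) * z.arg):ℝ) * I) := by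
  conv_lhs => rw [← Complex.norm_mul_exp_arg_mul_I z]
  rw [mul_pow, ← Complex.exp_nat_mul]
  push_cast
  ring_nf

/-- The window invariant. -/
def GInv (M : ℕ) (z : ℂ) (v : ℕ → ℂ) (s : ℕ) : Prop :=
  (∃ j, j < M ∧ v (s+j) ≠ 0) ∧
  ∃ β : ℕ → ℝ,
    (∀ j, j < M → v (s+j) ≠ 0 →
      v (s+j) = (‖(v (s+j))‖ : ℂ) * Complex.exp ((β j : ℝ) * I)) ∧
    (∀ a b, a ≤ b → b < M → v (s+a) ≠ 0 → v (s+b) ≠ 0 →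
      -((M:ℝ) * z.arg) ≤ β a - β b - ((b:ℝ) - (a:ℝ)) * z.arg ∧
        β a - β b - ((b:ℝ) - (a:ℝ)) * z.arg ≤ 0)

lemma ginv_base (M : ℕ) (hM : 1 ≤ M) (z : ℂ) (hz0 : 0 ≤ z.arg)
    (v : ℕ → ℂ) (s : ℕ) (h : ℕ → ℝ) (hpos : ∀ j, j < M → 0 < h j)
    (htail : ∀ j, j < M → v (s+j) = ((h j : ℝ) : ℂ) * z ^ (M-1-j)) :
    GInv M z v s := by
  constructor
  · refine ⟨M-1, by omega, ?_⟩
    rw [htail (M-1) (by omega)]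
    have : M-1-(M-1) = 0 := by omega
    rw [this, pow_zero, mul_one]
    exact_mod_cast (hpos (M-1) (by omega)).ne'
  · refine ⟨fun j => ((M-1-j : ℕ) : ℝ) * z.arg, ?_, ?_⟩
    · intro j hj _
      have hrep : v (s+j) = ((h j * ‖z‖ ^ (M-1-j) : ℝ) : ℂ)
          * Complex.exp (((((M-1-j : ℕ):ℝ) * z.arg) : ℝ) * I) := by
        rw [htail j hj, pow_rep z (M-1-j)]
        push_cast
        ring
      exact rep_of_nonneg (mul_nonneg (hpos j hj).le (pow_nonneg (norm_nonneg z) _)) hrep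
    · intro a b hab hb _ _
      have hb1 : b ≤ M-1 := by omega
      have ha1 : a ≤ M-1 := by omega
      have e1 : ((M-1-a : ℕ) : ℝ) = (M:ℝ) - 1 - a := by
        rw [Nat.cast_sub ha1, Nat.cast_sub hM, Nat.cast_one]
      have e2 : ((M-1-b : ℕ) : ℝ) = (M:ℝ) - 1 - b := by
        rw [Nat.cast_sub hb1, Nat.cast_sub hM, Nat.cast_one]
      dsimp only
      rw [e1, e2]
      have hMθ : 0 ≤ (M:ℝ) * z.arg := mul_nonneg (Nat.cast_nonneg M) hz0
      constructor <;> nlinarith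

lemma mulExpExp (a b x y : ℝ) :
    ((a:ℂ) * Complex.exp ((x:ℝ)*I)) * ((b:ℂ) * Complex.exp ((y:ℝ)*I))
      = (((a*b : ℝ)):ℂ) * Complex.exp (((x+y : ℝ):ℂ)*I) := by
  rw [mul_mul_mul_comm, ← Complex.exp_add]
  push_cast
  ring_nf

lemma ginv_step (M : ℕ) (hM : 2 ≤ M) (z : ℂ) (hz0 : 0 ≤ z.arg)
    (hzπ : (M:ℝ) * z.arg ≤ Real.pi)
    (v : ℕ → ℂ) (s : ℕ) (c : ℝ) (hc : 0 < c)
    (hrec : v s = (c:ℂ) * z * v (s+1) + v (s+M))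
    (h : GInv M z v (s+1)) : GInv M z v s := by
  obtain ⟨⟨j₀, hj₀, hj₀ne⟩, β, hrep, hpair⟩ := h
  have hMθ : 0 ≤ (M:ℝ) * z.arg := mul_nonneg (Nat.cast_nonneg M) hz0
  have idxM : s + 1 + (M - 1) = s + M := by omega
  have hzrep : z = (‖z‖ : ℂ) * Complex.exp ((z.arg : ℝ) * I) :=
    (Complex.norm_mul_exp_arg_mul_I z).symm
  -- shifted pairs (a ≥ 1)
  have pairsShift : ∀ a b, 1 ≤ a → a ≤ b → b < M → v (s+a) ≠ 0 → v (s+b) ≠ 0 →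
      -((M:ℝ) * z.arg) ≤ β (a-1) - β (b-1) - ((b:ℝ) - (a:ℝ)) * z.arg ∧
        β (a-1) - β (b-1) - ((b:ℝ) - (a:ℝ)) * z.arg ≤ 0 := by
    intro a b ha hab hb hva hvb
    have e1 : s + 1 + (a-1) = s + a := by omega
    have e2 : s + 1 + (b-1) = s + b := by omega
    have hva' : v (s+1+(a-1)) ≠ 0 := by rw [e1]; exact hva
    have hvb' : v (s+1+(b-1)) ≠ 0 := by rw [e2]; exact hvb
    have hp := hpair (a-1) (b-1) (by omega) (by omega) hva' hvb'
    have ecast : ((b-1:ℕ):ℝ) - ((a-1:ℕ):ℝ) = (b:ℝ) - (a:ℝ) := by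
      rw [Nat.cast_sub (by omega : 1 ≤ b), Nat.cast_sub ha, Nat.cast_one]; ring
    rw [ecast] at hp
    exact hp
  -- rep of v (s+1) and v (s+M) with names
  have pairsLast : ∀ b, 1 ≤ b → b < M → v (s+b) ≠ 0 → v (s+M) ≠ 0 →
      -((M:ℝ) * z.arg) ≤ β (b-1) - β (M-1) - ((M:ℝ) - (b:ℝ)) * z.arg ∧
        β (b-1) - β (M-1) - ((M:ℝ) - (b:ℝ)) * z.arg ≤ 0 := by
    intro b hb1 hbM hvb hvM
    have e2 : s + 1 + (b-1) = s + b := by omega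
    have hvb' : v (s+1+(b-1)) ≠ 0 := by rw [e2]; exact hvb
    have hvM' : v (s+1+(M-1)) ≠ 0 := by rw [idxM]; exact hvM
    have hp := hpair (b-1) (M-1) (by omega) (by omega) hvb' hvM'
    have ecast : ((M-1:ℕ):ℝ) - ((b-1:ℕ):ℝ) = (M:ℝ) - (b:ℝ) := by
      rw [Nat.cast_sub (by omega : 1 ≤ M), Nat.cast_sub hb1, Nat.cast_one]; ring
    rw [ecast] at hp
    exact hp
  have pairsFirst : ∀ b, 1 ≤ b → b < M → v (s+1) ≠ 0 → v (s+b) ≠ 0 →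
      -((M:ℝ) * z.arg) ≤ β 0 - β (b-1) - ((b:ℝ) - 1) * z.arg ∧
        β 0 - β (b-1) - ((b:ℝ) - 1) * z.arg ≤ 0 := by
    intro b hb1 hbM hv1 hvb
    have e2 : s + 1 + (b-1) = s + b := by omega
    have hvb' : v (s+1+(b-1)) ≠ 0 := by rw [e2]; exact hvb
    have hv1' : v (s+1+0) ≠ 0 := hv1
    have hp := hpair 0 (b-1) (by omega) (by omega) hv1' hvb'
    have ecast : ((b-1:ℕ):ℝ) - ((0:ℕ):ℝ) = (b:ℝ) - 1 := by
      rw [Nat.cast_sub hb1, Nat.cast_one, Nat.cast_zero]; ring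
    rw [ecast] at hp
    exact hp
  have key0 : v s ≠ 0 → ∃ b0 : ℝ,
      (v s = (‖(v s)‖ : ℂ) * Complex.exp ((b0:ℝ) * I)) ∧
      (∀ b, 1 ≤ b → b < M → v (s+b) ≠ 0 →
        -((M:ℝ) * z.arg) ≤ b0 - β (b-1) - (b:ℝ) * z.arg ∧
          b0 - β (b-1) - (b:ℝ) * z.arg ≤ 0) := by
    intro hvs
    by_cases h1 : v (s+1) = 0
    · -- B: v s = v (s+M)
      have hvv : v s = v (s+M) := by rw [hrec, h1, mul_zero, zero_add]
      have hM0 : v (s+M) ≠ 0 := by rw [← hvv]; exact hvs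
      have hM0' : v (s+1+(M-1)) ≠ 0 := by rw [idxM]; exact hM0
      refine ⟨β (M-1), ?_, ?_⟩
      · have hr := hrep (M-1) (by omega) hM0'
        rw [idxM] at hr
        rw [hvv]
        exact hr
      · intro b hb1 hbM hvb
        have hp := pairsLast b hb1 hbM hvb hM0
        constructor <;> [linarith [hp.2]; linarith [hp.1]]
    · -- v (s+1) ≠ 0
      have hv1' : v (s+1+0) ≠ 0 := h1
      have e0 := hrep 0 (by omega) hv1'
      have hcz : (c:ℂ) * z * v (s+1)
          = (((c * ‖z‖) * ‖(v (s+1))‖ : ℝ):ℂ)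
            * Complex.exp (((z.arg + β 0 : ℝ):ℂ) * I) := by
        conv_lhs => rw [hzrep, e0]
        rw [← mulExpExp (c * ‖z‖) (‖(v (s+1))‖) z.arg (β 0)]
        push_cast
        ring
      by_cases hM0 : v (s+M) = 0
      · -- C: v s = c z v(s+1)
        have hvv : v s = (((c * ‖z‖) * ‖(v (s+1))‖ : ℝ):ℂ)
            * Complex.exp (((z.arg + β 0 : ℝ):ℂ) * I) := by
          rw [hrec, hM0, add_zero, hcz]
        refine ⟨z.arg + β 0, rep_of_nonneg (by positivity) hvv, ?_⟩
        intro b hb1 hbM hvb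
        have hp := pairsFirst b hb1 hbM h1 hvb
        constructor <;> [linarith [hp.1]; linarith [hp.2]]
      · -- A: both nonzero, use rep_sum_two
        have hM0' : v (s+1+(M-1)) ≠ 0 := by rw [idxM]; exact hM0
        have eM := hrep (M-1) (by omega) hM0'
        rw [idxM] at eM
        have hvsum : v s = (‖(v (s+M))‖ : ℂ)
              * Complex.exp ((β (M-1) : ℝ) * I)
            + (((c * ‖z‖) * ‖(v (s+1))‖ : ℝ):ℂ)
              * Complex.exp (((z.arg + β 0 : ℝ):ℂ) * I) := by
          rw [hrec, hcz, ← eM, add_comm]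
        have hp01 := pairsLast 1 le_rfl (by omega) h1 hM0
        have hab : β (M-1) ≤ z.arg + β 0 := by
          have := hp01.1
          push_cast at this ⊢
          linarith
        have hπ : (z.arg + β 0) - β (M-1) ≤ Real.pi := by
          have := hp01.2
          push_cast at this
          linarith
        obtain ⟨δ, hδ1, hδ2, hδrep⟩ :=
          rep_sum_two (norm_nonneg (v (s+M))) (by positivity) hab hπ hvsum hvs
        refine ⟨δ, hδrep, ?_⟩
        intro b hb1 hbM hvb
        have hpF := pairsFirst b hb1 hbM h1 hvb
        have hpL := pairsLast b hb1 hbM hvb hM0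
        constructor
        · linarith [hpL.2]
        · linarith [hpF.2]
  -- assembly
  by_cases hvs : v s = 0
  · -- position 0 is zero; shift everything
    constructor
    · by_cases h1 : v (s+1) = 0
      · have hM0 : v (s+M) = 0 := by
          have h' := hrec
          rw [h1, mul_zero, zero_add] at h'
          rw [← h']; exact hvs
        refine ⟨j₀+1, ?_, ?_⟩
        · rcases Nat.lt_or_ge (j₀+1) M with hj | hj
          · exact hj
          · exfalso
            have hje : j₀ = M-1 := by omega
            rw [hje, idxM] at hj₀ne
            exact hj₀ne hM0
        · have e1 : s + (j₀+1) = s + 1 + j₀ := by omega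
          rw [e1]; exact hj₀ne
      · exact ⟨1, by omega, h1⟩
    · refine ⟨fun j => β (j-1), ?_, ?_⟩
      · intro j hj hvj
        match j, hvj with
        | 0, hvj => exact (hvj hvs).elim
        | (j+1), hvj =>
          have e1 : s + (j+1) = s + 1 + j := by omega
          rw [e1] at hvj ⊢
          simpa using hrep j (by omega) hvj
      · intro a b hab hb hva hvb
        match a, hva with
        | 0, hva => exact (hva hvs).elim
        | (a+1), hva => exact pairsShift (a+1) b (by omega) hab hb hva hvb
  · obtain ⟨b0, hb0rep, hb0pair⟩ := key0 hvs
    constructor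
    · exact ⟨0, by omega, by simpa using hvs⟩
    · refine ⟨fun j => if j = 0 then b0 else β (j-1), ?_, ?_⟩
      · intro j hj hvj
        match j with
        | 0 => simpa using hb0rep
        | (j+1) =>
          simp only [Nat.add_eq_zero, and_false, if_neg (by omega : ¬ j + 1 = 0)]
          have e1 : s + (j+1) = s + 1 + j := by omega
          rw [e1] at hvj ⊢
          simpa using hrep j (by omega) hvj
      · intro a b hab hb hva hvb
        match a, b with
        | 0, 0 =>
          simp only [if_pos rfl]
          constructor <;> [simpa using neg_nonpos.mpr hMθ; simp]
        | 0, (b+1) =>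
          simp only [if_pos rfl, if_neg (by omega : ¬ b + 1 = 0)]
          have := hb0pair (b+1) (by omega) hb hvb
          simpa using this
        | (a+1), (b+1) =>
          simp only [if_neg (by omega : ¬ a + 1 = 0), if_neg (by omega : ¬ b + 1 = 0)]
          exact pairsShift (a+1) (b+1) (by omega) hab hb hva hvb

lemma ginv_sum_ne (M : ℕ) (hM : 1 ≤ M) (z : ℂ) (hz0 : 0 ≤ z.arg)
    (hzπ : (M:ℝ) * z.arg ≤ Real.pi) (v : ℕ → ℂ)
    (h : GInv M z v 0) : (∑ j ∈ Finset.range M, v j) ≠ 0 := by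
  obtain ⟨⟨j₀, hj₀, hj₀ne⟩, β, hrep, hpair⟩ := h
  simp only [Nat.zero_add] at hrep hpair hj₀ne
  set θ := z.arg with hθdef
  set W : ℝ := ((M:ℝ) - 1) * θ with hWdef
  have hW0 : 0 ≤ W := by
    apply mul_nonneg _ hz0
    have : (1:ℝ) ≤ (M:ℝ) := by exact_mod_cast hM
    linarith
  have hWπ : W < Real.pi := by
    rcases lt_or_eq_of_le hz0 with hpos | heq
    · have : W < (M:ℝ) * θ := by
        have : (M:ℝ) * θ - W = θ := by rw [hWdef]; ring
        linarith
      linarith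
    · rw [hWdef, ← heq, mul_zero]
      exact Real.pi_pos
  -- pairwise bound both directions
  have hpw : ∀ a b, a < M → b < M → v a ≠ 0 → v b ≠ 0 → β a - β b ≤ W := by
    intro a b ha hb hva hvb
    rcases le_total a b with hab | hab
    · have hp := (hpair a b hab hb hva hvb).2
      have hcast : ((b:ℝ) - (a:ℝ)) ≤ (M:ℝ) - 1 := by
        have : (b:ℝ) ≤ (M:ℝ) - 1 := by
          have : b ≤ M - 1 := by omega
          have h2 : ((b:ℝ)) ≤ ((M-1 : ℕ):ℝ) := by exact_mod_cast this
          rwa [Nat.cast_sub hM, Nat.cast_one] at h2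
        have ha0 : (0:ℝ) ≤ (a:ℝ) := Nat.cast_nonneg a
        linarith
      nlinarith [mul_le_mul_of_nonneg_right hcast hz0]
    · have hp := (hpair b a hab ha hvb hva).1
      rcases Nat.eq_or_lt_of_le hab with heq | hlt
      · have : a = b := by omega
        rw [this]; simpa using hW0
      · have hba : (1:ℝ) ≤ (a:ℝ) - (b:ℝ) := by
          have : b + 1 ≤ a := hlt
          have h2 : ((b:ℝ)) + 1 ≤ (a:ℝ) := by exact_mod_cast this
          linarith
        nlinarith [mul_le_mul_of_nonneg_right hba hz0]
  -- min and max over nonzero indices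
  classical
  set S : Finset ℕ := (Finset.range M).filter (fun j => v j ≠ 0) with hSdef
  have hj₀S : j₀ ∈ S := by
    rw [hSdef, Finset.mem_filter, Finset.mem_range]
    exact ⟨hj₀, hj₀ne⟩
  have hSne : S.Nonempty := ⟨j₀, hj₀S⟩
  obtain ⟨jmin, hjminS, hjmin⟩ := S.exists_min_image β hSne
  obtain ⟨jmax, hjmaxS, hjmax⟩ := S.exists_max_image β hSne
  have hmem : ∀ j ∈ S, j < M ∧ v j ≠ 0 := by
    intro j hj
    rw [hSdef, Finset.mem_filter, Finset.mem_range] at hj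
    exact hj
  set m : ℝ := (β jmin + β jmax)/2 with hmdef
  have hbound : ∀ j ∈ S, |β j - m| ≤ W/2 := by
    intro j hj
    have h1 : β jmin ≤ β j := hjmin j hj
    have h2 : β j ≤ β jmax := hjmax j hj
    have h3 : β jmax - β jmin ≤ W :=
      hpw jmax jmin (hmem _ hjmaxS).1 (hmem _ hjminS).1 (hmem _ hjmaxS).2 (hmem _ hjminS).2
    rw [abs_le, hmdef]
    constructor <;> linarith
  -- real part positivity
  have hre : 0 < (Complex.exp (-(m:ℂ) * I) * ∑ j ∈ Finset.range M, v j).re := by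
    rw [Finset.mul_sum]
    rw [Complex.re_sum]
    apply Finset.sum_pos'
    · intro j hjr
      by_cases hvj : v j = 0
      · simp [hvj]
      · have hjS : j ∈ S := by
          rw [hSdef, Finset.mem_filter]
          exact ⟨hjr, hvj⟩
        rw [hrep j (Finset.mem_range.mp hjr) hvj, expShift]
        rw [reMulExp]
        apply mul_nonneg (norm_nonneg _)
        have hb := hbound j hjS
        have : W/2 < Real.pi/2 := by linarith
        apply Real.cos_nonneg_of_mem_Icc
        constructor
        · have := (abs_le.mp hb).1; linarith [Real.pi_pos]
        · have := (abs_le.mp hb).2; linarith [Real.pi_pos]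
    · refine ⟨j₀, Finset.mem_range.mpr hj₀, ?_⟩
      rw [hrep j₀ hj₀ hj₀ne, expShift, reMulExp]
      apply mul_pos
      · simpa [norm_pos_iff] using hj₀ne
      · apply Real.cos_pos_of_mem_Ioo
        have hb := hbound j₀ hj₀S
        have hWh : W/2 < Real.pi/2 := by linarith
        constructor
        · have := (abs_le.mp hb).1; linarith
        · have := (abs_le.mp hb).2; linarith
  intro hzero
  rw [hzero, mul_zero] at hre
  simp at hre

lemma analytic_main (M N : ℕ) (hM : 2 ≤ M) (hMN : M ≤ N) (z : ℂ)
    (hz0 : 0 ≤ z.arg) (hzπ : (M:ℝ) * z.arg ≤ Real.pi)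
    (v : ℕ → ℂ) (c h : ℕ → ℝ)
    (hrec : ∀ i, i + M ≤ N → v i = ((c i : ℝ):ℂ) * z * v (i+1) + v (i+M))
    (hc : ∀ i, i + M ≤ N → 0 < c i)
    (htail : ∀ j, j < M → v (N-M+1+j) = ((h j : ℝ):ℂ) * z ^ (M-1-j))
    (hh : ∀ j, j < M → 0 < h j) :
    (∑ j ∈ Finset.range M, v j) ≠ 0 := by
  have base : GInv M z v (N-M+1) :=
    ginv_base M (by omega) z hz0 v (N-M+1) h hh htail
  have main : ∀ d, d ≤ N-M+1 → GInv M z v (N-M+1-d) := by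
    intro d
    induction d with
    | zero => intro _; simpa using base
    | succ d ih =>
      intro hd
      have hstep : N-M+1-(d+1) + 1 = N-M+1-d := by omega
      have hle : (N-M+1-(d+1)) + M ≤ N := by omega
      have hGI : GInv M z v ((N-M+1-(d+1))+1) := by
        rw [hstep]; exact ih (by omega)
      exact ginv_step M hM z hz0 hzπ v _ (c (N-M+1-(d+1))) (hc _ hle) (hrec _ hle) hGI
  have h0 : GInv M z v 0 := by
    have := main (N-M+1) le_rfl
    simpa using this
  exact ginv_sum_ne M (by omega) z hz0 hzπ v h0

lemma modClass (M' : ℕ) (q : Polynomial ℝ) (hq : q ≠ 0) (s : ZMod M')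
    (hqs : ∀ e ∈ q.support, (e : ZMod M') = s) :
    ∀ (d : ℕ) (p : Polynomial ℝ), p.natDegree ≤ d → ∀ (r : ZMod M'),
      (∀ e ∈ p.support, (e : ZMod M') = r) →
      ∀ e ∈ (p % q).support, (e : ZMod M') = r := by
  intro d
  induction d using Nat.strong_induction_on with
  | _ d ih =>
    intro p hpd r hpr
    have hlcq : q.leadingCoeff ≠ 0 := leadingCoeff_ne_zero.mpr hq
    set q' : Polynomial ℝ := q * C q.leadingCoeff⁻¹ with hq'def
    have hq'mon : q'.Monic := monic_mul_leadingCoeff_inv hq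
    have hdegq' : q'.degree = q.degree := degree_mul_leadingCoeff_inv q hq
    have hmod : p % q = p %ₘ q' := Polynomial.mod_def
    by_cases hdeg : p.degree < q'.degree
    · rw [hmod, (modByMonic_eq_self_iff hq'mon).mpr hdeg]
      exact hpr
    · push_neg at hdeg
      have hp0 : p ≠ 0 := by
        intro h
        rw [h, degree_zero] at hdeg
        have : q'.degree ≠ ⊥ := degree_ne_bot.mpr hq'mon.ne_zero
        simp only [le_bot_iff] at hdeg
        exact this hdeg
      by_cases hq1 : q.natDegree = 0
      · -- q' = 1, p %ₘ 1 = 0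
        have hq'nd : q'.natDegree = 0 := by
          have := natDegree_eq_of_degree_eq hdegq'
          omega
        have hq'1 : q' = 1 := hq'mon.natDegree_eq_zero.mp hq'nd
        rw [hmod, hq'1, modByMonic_one]
        intro e he
        simp at he
      · -- main reduction step
        have hdq : q.natDegree ≤ p.natDegree := by
          apply natDegree_le_natDegree
          rw [← hdegq']
          exact hdeg
        set α : ℝ := p.leadingCoeff * q.leadingCoeff⁻¹ with hαdef
        have hα : α ≠ 0 :=
          mul_ne_zero (leadingCoeff_ne_zero.mpr hp0) (inv_ne_zero hlcq)
        set k : ℕ := p.natDegree - q.natDegree with hkdef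
        set t : Polynomial ℝ := C α * X ^ k * q with htdef
        have ht0 : t ≠ 0 := by
          apply mul_ne_zero (mul_ne_zero _ _) hq
          · exact C_ne_zero.mpr hα
          · exact pow_ne_zero _ X_ne_zero
        have hndCX : (C α * X ^ k).natDegree = k := natDegree_C_mul_X_pow k α hα
        have hndt : t.natDegree = p.natDegree := by
          rw [htdef, natDegree_mul (mul_ne_zero (C_ne_zero.mpr hα) (pow_ne_zero _ X_ne_zero)) hq,
            hndCX]
          omega
        have hdegt : t.degree = p.degree := by
          rw [degree_eq_natDegree ht0, degree_eq_natDegree hp0, hndt]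
        have hlct : t.leadingCoeff = p.leadingCoeff := by
          rw [htdef, leadingCoeff_mul, leadingCoeff_mul, leadingCoeff_C, leadingCoeff_X_pow]
          field_simp [hαdef]
          rw [hαdef]; field_simp
        have hsub : (p - t).degree < p.degree := degree_sub_lt hdegt.symm hp0 hlct.symm
        -- class of p - t
        have hclass : ∀ e ∈ (p - t).support, (e : ZMod M') = r := by
          intro e he
          have hne := mem_support_iff.mp he
          rw [coeff_sub] at hne
          have : p.coeff e ≠ 0 ∨ t.coeff e ≠ 0 := by
            by_contra hcon
            push_neg at hcon
            rw [hcon.1, hcon.2, sub_zero] at hne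
            exact hne rfl
          rcases this with h | h
          · exact hpr e (mem_support_iff.mpr h)
          · have hce : t.coeff e ≠ 0 := h
            rw [htdef, mul_assoc, coeff_C_mul, coeff_X_pow_mul'] at hce
            by_cases hke : k ≤ e
            · rw [if_pos hke] at hce
              have hqe : (e - k) ∈ q.support := by
                rw [mem_support_iff]
                intro h0
                rw [h0, mul_zero] at hce
                exact hce (by ring)
              have h1 : ((e - k : ℕ) : ZMod M') = s := hqs _ hqe
              have h2 : ((p.natDegree : ℕ) : ZMod M') = r :=
                hpr _ (natDegree_mem_support_of_nonzero hp0)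
              have h3 : ((q.natDegree : ℕ) : ZMod M') = s :=
                hqs _ (natDegree_mem_support_of_nonzero hq)
              have he1 : (e : ℕ) = (e - k) + k := by omega
              have hk1 : (k : ZMod M') = r - s := by
                rw [hkdef, Nat.cast_sub hdq, h2, h3]
              calc (e : ZMod M') = (((e - k) + k : ℕ) : ZMod M') := by rw [← he1]
                _ = ((e - k : ℕ) : ZMod M') + ((k : ℕ) : ZMod M') := by push_cast; ring
                _ = s + (r - s) := by rw [h1, hk1]
                _ = r := by ring
            · rw [if_neg hke] at hce
              exact (hce (by ring)).elim
        -- (p - t) % q = p % q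
        have hdvd : q' ∣ t := by
          refine ⟨C α * X ^ k * C q.leadingCoeff, ?_⟩
          rw [htdef, hq'def]
          have h2 : q * C q.leadingCoeff⁻¹ * (C α * X ^ k * C q.leadingCoeff)
              = (C q.leadingCoeff⁻¹ * C q.leadingCoeff) * (C α * X ^ k) * q := by ring
          rw [h2, ← C_mul, inv_mul_cancel₀ hlcq, C_1, one_mul]
        have htmod : t %ₘ q' = 0 := (modByMonic_eq_zero_iff_dvd hq'mon).mpr hdvd
        have hmodeq : (p - t) %ₘ q' = p %ₘ q' := by
          rw [sub_modByMonic, htmod, sub_zero]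
        have hndsub : (p - t).natDegree < p.natDegree := by
          by_cases h0 : p - t = 0
          · rw [h0, natDegree_zero]
            omega
          · exact natDegree_lt_natDegree h0 hsub
        intro e he
        have hrw : p % q = (p - t) % q := by
          rw [hmod, ← hmodeq, ← Polynomial.mod_def]
        rw [hrw] at he
        exact ih (p - t).natDegree (lt_of_lt_of_le hndsub hpd) (p - t) le_rfl r hclass e he

lemma gea_lt (a : ℕ → ℝ) (n M i : ℕ) (h : i < M) :
    gea a n M i = geaInit a n M i := by
  rw [gea]
  simp [h]

lemma gea_ge (a : ℕ → ℝ) (n M i : ℕ) (hM : 2 ≤ M) (h : M ≤ i) :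
    gea a n M i = gea a n M (i - M) % gea a n M (i - M + 1) := by
  rw [gea]
  simp [Nat.not_lt.mpr h, hM]

lemma geaInit_support (a : ℕ → ℝ) (n M j : ℕ) :
    ∀ e ∈ (geaInit a n M j).support, ∃ l, l ≤ n ∧ l % M = j ∧ e = n - l := by
  intro e he
  have hne := Polynomial.mem_support_iff.mp he
  rw [geaInit, Polynomial.finset_sum_coeff] at hne
  obtain ⟨l, hl, hlne⟩ := Finset.exists_ne_zero_of_sum_ne_zero hne
  rw [Finset.mem_range] at hl
  by_cases hmod : l % M = j
  · rw [if_pos hmod, coeff_C_mul, coeff_X_pow] at hlne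
    by_cases he' : e = n - l
    · exact ⟨l, by omega, hmod, he'⟩
    · rw [if_neg he', mul_zero] at hlne
      exact (hlne rfl).elim
  · rw [if_neg hmod] at hlne
    simp at hlne


lemma modEq_squeeze {D K M : ℕ} (hM : 2 ≤ M) (h : D ≡ K [MOD M]) (hub : D ≤ K + (M - 2)) :
    D ≤ K := by
  by_contra hcon
  push_neg at hcon
  have hdvd : M ∣ D - K := (Nat.modEq_iff_dvd' (le_of_lt hcon)).mp h.symm
  have h0 : D - K = 0 := Nat.eq_zero_of_dvd_of_lt hdvd (by omega)
  omega

lemma modEq_eq {D K M : ℕ} (hM : 1 ≤ M) (h : D ≡ K [MOD M]) (h1 : D ≤ K) (h2 : K < D + M) :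
    D = K := by
  have hdvd : M ∣ K - D := (Nat.modEq_iff_dvd' h1).mp h
  have h0 : K - D = 0 := Nat.eq_zero_of_dvd_of_lt hdvd (by omega)
  omega

lemma degree_mod_lt_of_ne_zero (p q : Polynomial ℝ) (hq : q ≠ 0) :
    (p % q).degree < q.degree := by
  rw [Polynomial.mod_def]
  exact lt_of_lt_of_le (degree_modByMonic_lt p (monic_mul_leadingCoeff_inv hq))
    (degree_mul_leadingCoeff_inv q hq).le

section Gea

variable {a : ℕ → ℝ} {n M : ℕ}

lemma gea_ne (hpos : ∀ i ≤ n, 0 < (gea a n M i).leadingCoeff) {i : ℕ} (hi : i ≤ n) :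
    gea a n M i ≠ 0 :=
  leadingCoeff_ne_zero.mp (hpos i hi).ne'

lemma gea_class (hM : 2 ≤ M) (hpos : ∀ i ≤ n, 0 < (gea a n M i).leadingCoeff) :
    ∀ i, i ≤ n → ∀ e ∈ (gea a n M i).support,
      (e : ZMod M) = (n : ZMod M) - (i : ZMod M) := by
  intro i
  induction i using Nat.strong_induction_on with
  | _ i ih =>
    intro hin e he
    by_cases hiM : i < M
    · rw [gea_lt _ _ _ _ hiM] at he
      obtain ⟨l, hln, hlm, hel⟩ := geaInit_support a n M i e he
      subst hel
      rw [Nat.cast_sub hln]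
      congr 1
      calc (l : ZMod M) = ((l % M : ℕ) : ZMod M) := (ZMod.natCast_mod l M).symm
        _ = (i : ZMod M) := by rw [hlm]
    · push_neg at hiM
      rw [gea_ge a n M i hM hiM] at he
      have hq0 : gea a n M (i-M+1) ≠ 0 := gea_ne hpos (by omega)
      have hres := modClass M (gea a n M (i-M+1)) hq0
        ((n : ZMod M) - ((i-M+1 : ℕ) : ZMod M)) (ih (i-M+1) (by omega) (by omega))
        (gea a n M (i-M)).natDegree (gea a n M (i-M)) le_rfl
        ((n : ZMod M) - ((i-M : ℕ) : ZMod M)) (ih (i-M) (by omega) (by omega)) e he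
      rw [hres, Nat.cast_sub hiM, ZMod.natCast_self, sub_zero]

lemma gea_natDegree_le (hM : 2 ≤ M) (hpos : ∀ i ≤ n, 0 < (gea a n M i).leadingCoeff) :
    ∀ i, i ≤ n → (gea a n M i).natDegree ≤ n - i := by
  intro i
  induction i using Nat.strong_induction_on with
  | _ i ih =>
    intro hin
    by_cases hiM : i < M
    · have hgeq : gea a n M i = geaInit a n M i := gea_lt _ _ _ _ hiM
      have hne : gea a n M i ≠ 0 := gea_ne hpos hin
      rw [hgeq] at hne ⊢
      have hmem := natDegree_mem_support_of_nonzero hne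
      obtain ⟨l, hln, hlm, hel⟩ := geaInit_support a n M i _ hmem
      have hil : i ≤ l := by
        have := Nat.mod_le l M
        omega
      rw [hel]
      omega
    · push_neg at hiM
      have hne : gea a n M i ≠ 0 := gea_ne hpos hin
      have hq0 : gea a n M (i-M+1) ≠ 0 := gea_ne hpos (by omega)
      have hlt : (gea a n M i).degree < (gea a n M (i-M+1)).degree := by
        rw [gea_ge a n M i hM hiM]
        exact degree_mod_lt_of_ne_zero _ _ hq0
      have hndlt : (gea a n M i).natDegree < (gea a n M (i-M+1)).natDegree :=
        natDegree_lt_natDegree hne hlt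
      have hle : (gea a n M (i-M+1)).natDegree ≤ n - (i-M+1) := ih (i-M+1) (by omega) (by omega)
      -- class of natDegree
      have hcl := gea_class hM hpos i hin _ (natDegree_mem_support_of_nonzero hne)
      have hcast : (((gea a n M i).natDegree : ℕ) : ZMod M) = ((n - i : ℕ) : ZMod M) := by
        rw [hcl, Nat.cast_sub hin]
      have hmodeq : (gea a n M i).natDegree ≡ (n - i) [MOD M] :=
        (ZMod.natCast_eq_natCast_iff _ _ _).mp hcast
      exact modEq_squeeze hM hmodeq (by omega)

lemma geaInit_coeff_n : (geaInit a n M 0).coeff n = a 0 := by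
  rw [geaInit, finset_sum_coeff]
  rw [Finset.sum_eq_single 0]
  · simp
  · intro l hl hl0
    by_cases hmod : l % M = 0
    · rw [if_pos hmod, coeff_C_mul, coeff_X_pow, if_neg (by
        rw [Finset.mem_range] at hl
        omega), mul_zero]
    · rw [if_neg hmod, coeff_zero]
  · intro h
    simp at h

lemma gea_natDegree_eq (hM : 2 ≤ M) (hMn : M ≤ n) (ha0 : a 0 ≠ 0)
    (hpos : ∀ i ≤ n, 0 < (gea a n M i).leadingCoeff) :
    ∀ k, k ≤ n → (gea a n M (n-k)).natDegree = k := by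
  intro k
  induction k using Nat.strong_induction_on with
  | _ k ih =>
    intro hkn
    have hne : gea a n M (n-k) ≠ 0 := gea_ne hpos (by omega)
    have hle : (gea a n M (n-k)).natDegree ≤ k := by
      have := gea_natDegree_le hM hpos (n-k) (by omega)
      omega
    have hcl := gea_class hM hpos (n-k) (by omega) _ (natDegree_mem_support_of_nonzero hne)
    have hcast : (((gea a n M (n-k)).natDegree : ℕ) : ZMod M) = ((k : ℕ) : ZMod M) := by
      rw [hcl, Nat.cast_sub hkn]
      ring
    have hmodeq : (gea a n M (n-k)).natDegree ≡ k [MOD M] :=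
      (ZMod.natCast_eq_natCast_iff _ _ _).mp hcast
    by_cases hkM : k < M
    · exact modEq_eq (by omega) hmodeq hle (by omega)
    · push_neg at hkM
      by_cases hkn' : k = n
      · -- natDegree (gea 0) = n
        have h0 : n - k = 0 := by omega
        rw [h0]
        have hcoeff : (gea a n M 0).coeff n ≠ 0 := by
          rw [gea_lt _ _ _ _ (by omega), geaInit_coeff_n]
          exact ha0
        have hge : n ≤ (gea a n M 0).natDegree := le_natDegree_of_ne_zero hcoeff
        rw [h0] at hle
        omega
      · -- M ≤ k < n
        have hj : (gea a n M (n-(k-M+1))).natDegree = k-M+1 := ih (k-M+1) (by omega) (by omega)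
        have hq0 : gea a n M (n-(k-M+1)-M+1) ≠ 0 := gea_ne hpos (by omega)
        have hlt : (gea a n M (n-(k-M+1))).degree < (gea a n M (n-(k-M+1)-M+1)).degree := by
          rw [gea_ge a n M (n-(k-M+1)) hM (by omega)]
          exact degree_mod_lt_of_ne_zero _ _ hq0
        have hidx : n-(k-M+1)-M+1 = n-k := by omega
        rw [hidx] at hlt
        have hndlt : (gea a n M (n-(k-M+1))).natDegree < (gea a n M (n-k)).natDegree :=
          natDegree_lt_natDegree (gea_ne hpos (by omega)) hlt
        rw [hj] at hndlt
        exact modEq_eq (by omega) hmodeq hle (by omega)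

lemma gea_modEq_support (hM : 2 ≤ M) (hpos : ∀ i ≤ n, 0 < (gea a n M i).leadingCoeff)
    {i : ℕ} (hi : i ≤ n) {e : ℕ} (he : e ∈ (gea a n M i).support) :
    e ≡ (n - i) [MOD M] := by
  have h1 := gea_class hM hpos i hi e he
  have h2 : ((e : ℕ) : ZMod M) = ((n - i : ℕ) : ZMod M) := by
    rw [h1, Nat.cast_sub hi]
  exact (ZMod.natCast_eq_natCast_iff _ _ _).mp h2

lemma gea_rec (hM : 2 ≤ M) (hMn : M ≤ n) (ha0 : a 0 ≠ 0)
    (hpos : ∀ i ≤ n, 0 < (gea a n M i).leadingCoeff) (i : ℕ) (hi : i + M ≤ n) :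
    gea a n M (i+M) = gea a n M i
      - C ((gea a n M i).leadingCoeff * ((gea a n M (i+1)).leadingCoeff)⁻¹)
        * X * gea a n M (i+1) := by
  set p := gea a n M i with hpdef
  set q := gea a n M (i+1) with hqdef
  have hple : i ≤ n := by omega
  have hqle : i + 1 ≤ n := by omega
  have hp0 : p ≠ 0 := gea_ne hpos hple
  have hq0 : q ≠ 0 := gea_ne hpos hqle
  have hlcq : q.leadingCoeff ≠ 0 := leadingCoeff_ne_zero.mpr hq0
  have hndp : p.natDegree = n - i := by
    have := gea_natDegree_eq hM hMn ha0 hpos (n - i) (by omega)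
    rw [show n - (n - i) = i by omega] at this
    exact this
  have hndq : q.natDegree = n - i - 1 := by
    have := gea_natDegree_eq hM hMn ha0 hpos (n - (i+1)) (by omega)
    rw [show n - (n - (i+1)) = i + 1 by omega] at this
    rw [this]
    omega
  set c : ℝ := p.leadingCoeff * q.leadingCoeff⁻¹ with hcdef
  set rem : Polynomial ℝ := p - C c * X * q with hremdef
  set q' : Polynomial ℝ := q * C q.leadingCoeff⁻¹ with hq'def
  have hq'mon : q'.Monic := monic_mul_leadingCoeff_inv hq0
  have hdegq' : q'.degree = q.degree := degree_mul_leadingCoeff_inv q hq0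
  have hsum : rem + q' * (C p.leadingCoeff * X) = p := by
    have h1 : q' * (C p.leadingCoeff * X) = C c * X * q := by
      rw [hq'def, hcdef]
      have h2 : q * C q.leadingCoeff⁻¹ * (C p.leadingCoeff * X)
          = (C q.leadingCoeff⁻¹ * C p.leadingCoeff) * X * q := by ring
      rw [h2, ← C_mul, mul_comm q.leadingCoeff⁻¹ p.leadingCoeff]
    rw [h1, hremdef]
    ring
  have hdegrem : rem.degree < q'.degree := by
    rw [hdegq', degree_eq_natDegree hq0, hndq]
    rw [degree_lt_iff_coeff_zero]
    intro m hm
    have hm1 : n - i - 1 ≤ m := by exact_mod_cast hm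
    have hXq : (C c * X * q).coeff m = c * q.coeff (m - 1) := by
      rw [mul_assoc, coeff_C_mul]
      congr 1
      conv_lhs => rw [show m = (m-1)+1 from by omega]
      rw [coeff_X_mul]
    rw [hremdef, coeff_sub, hXq]
    rcases lt_trichotomy m (n - i) with hlt | heq | hgt
    · -- m = n - i - 1
      have hme : m = n - i - 1 := by omega
      have hpe : p.coeff m = 0 := by
        by_contra hne
        have := gea_modEq_support hM hpos hple (mem_support_iff.mpr hne)
        have hdvd : M ∣ (n - i) - m := (Nat.modEq_iff_dvd' (by omega)).mp this
        have h0 : (n - i) - m = 0 := Nat.eq_zero_of_dvd_of_lt hdvd (by omega)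
        omega
      have hqe : q.coeff (m - 1) = 0 := by
        by_contra hne
        have := gea_modEq_support hM hpos hqle (mem_support_iff.mpr hne)
        have hdvd : M ∣ (n - (i+1)) - (m-1) := (Nat.modEq_iff_dvd' (by omega)).mp this
        have h0 : (n - (i+1)) - (m-1) = 0 := Nat.eq_zero_of_dvd_of_lt hdvd (by omega)
        omega
      rw [hpe, hqe, mul_zero, sub_zero]
    · -- m = n - i : leading coefficients cancel
      have hpc : p.coeff m = p.leadingCoeff := by
        rw [← heq] at hndp
        rw [← hndp]
        rfl
      have hqc : q.coeff (m - 1) = q.leadingCoeff := by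
        have : m - 1 = q.natDegree := by omega
        rw [this]
        rfl
      rw [hpc, hqc, hcdef]
      field_simp
      ring
    · -- m > n - i : both above the degrees
      have hpe : p.coeff m = 0 := coeff_eq_zero_of_natDegree_lt (by omega)
      have hqe : q.coeff (m-1) = 0 := coeff_eq_zero_of_natDegree_lt (by omega)
      rw [hpe, hqe, mul_zero, sub_zero]
  have huniq := div_modByMonic_unique (C p.leadingCoeff * X) rem hq'mon ⟨hsum, hdegrem⟩
  have hmod : p % q = rem := by
    rw [Polynomial.mod_def, ← hq'def, huniq.2]
  rw [gea_ge a n M (i+M) hM (by omega)]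
  rw [show i + M - M = i by omega]
  rw [← hpdef, ← hqdef]
  exact hmod

lemma gea_tail (hM : 2 ≤ M) (hMn : M ≤ n) (ha0 : a 0 ≠ 0)
    (hpos : ∀ i ≤ n, 0 < (gea a n M i).leadingCoeff) (k : ℕ) (hk : k < M) :
    gea a n M (n-k) = C ((gea a n M (n-k)).leadingCoeff) * X ^ k := by
  have hkn : k ≤ n := by omega
  have hnd : (gea a n M (n-k)).natDegree = k := gea_natDegree_eq hM hMn ha0 hpos k hkn
  ext e
  rw [coeff_C_mul, coeff_X_pow]
  by_cases he : e = k
  · rw [if_pos he, mul_one, he]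
    have hlc : (gea a n M (n-k)).leadingCoeff
        = (gea a n M (n-k)).coeff ((gea a n M (n-k)).natDegree) := rfl
    rw [hlc, hnd]
  · rw [if_neg he, mul_zero]
    by_contra hne
    have hsupp : e ∈ (gea a n M (n-k)).support := mem_support_iff.mpr hne
    have hle : e ≤ k := by
      have := le_natDegree_of_ne_zero hne
      omega
    have hmod := gea_modEq_support hM hpos (by omega : n - k ≤ n) hsupp
    rw [show n - (n-k) = k by omega] at hmod
    have hdvd : M ∣ k - e := (Nat.modEq_iff_dvd' hle).mp hmod
    have h0 : k - e = 0 := Nat.eq_zero_of_dvd_of_lt hdvd (by omega)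
    omega

end Gea

end GEAhelpers

/-- If all the leading coefficients `h_0, ..., h_n` of the polynomials `f_0, ..., f_n`
produced by the generalized Euclidean algorithm with step `M` (2 ≤ M ≤ n) are positive,
then every complex zero `z` of `f` satisfies `|arg z| > π/M`. -/
theorem gen_euclid_pos_leading_coeffs_forbidden_sector
    (n M : ℕ) (a : ℕ → ℝ) (ha0 : a 0 ≠ 0) (hM : 2 ≤ M) (hMn : M ≤ n)
    (hpos : ∀ i ≤ n, 0 < (gea a n M i).leadingCoeff)
    (z : ℂ) (hroot : (∑ l ∈ Finset.range (n + 1), (a l : ℂ) * z ^ (n - l)) = 0) :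
    Real.pi / M < |Complex.arg z| := by
  by_contra hcon
  push_neg at hcon
  have hMR : (0:ℝ) < (M:ℝ) := by exact_mod_cast (by omega : 0 < M)
  -- sum identity
  have hsum : ∀ w : ℂ, (∑ j ∈ Finset.range M, Polynomial.aeval w (gea a n M j))
      = ∑ l ∈ Finset.range (n+1), (a l : ℂ) * w ^ (n-l) := by
    intro w
    have h1 : ∀ j ∈ Finset.range M, Polynomial.aeval w (gea a n M j)
        = ∑ l ∈ Finset.range (n+1),
            (if l % M = j then (a l : ℂ) * w ^ (n-l) else 0) := by
      intro j hj
      rw [Finset.mem_range] at hj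
      rw [gea_lt a n M j hj, geaInit, map_sum]
      refine Finset.sum_congr rfl ?_
      intro l _
      rw [apply_ite (Polynomial.aeval w), map_zero, map_mul, map_pow, aeval_C, aeval_X]
      rfl
    rw [Finset.sum_congr rfl h1, Finset.sum_comm]
    refine Finset.sum_congr rfl ?_
    intro l _
    rw [Finset.sum_ite_eq (Finset.range M) (l % M) (fun _ => (a l : ℂ) * w ^ (n-l))]
    rw [if_pos (Finset.mem_range.mpr (Nat.mod_lt l (by omega)))]
  -- key nonvanishing
  have key : ∀ w : ℂ, 0 ≤ w.arg → (M:ℝ) * w.arg ≤ Real.pi →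
      (∑ l ∈ Finset.range (n+1), (a l : ℂ) * w ^ (n-l)) ≠ 0 := by
    intro w h1 h2
    rw [← hsum w]
    apply analytic_main M n hM hMn w h1 h2
      (fun i => Polynomial.aeval w (gea a n M i))
      (fun i => (gea a n M i).leadingCoeff * ((gea a n M (i+1)).leadingCoeff)⁻¹)
      (fun j => (gea a n M (n-(M-1-j))).leadingCoeff)
    · intro i hi
      have hr := gea_rec hM hMn ha0 hpos i hi
      have := congrArg (Polynomial.aeval w) hr
      rw [map_sub, map_mul, map_mul, aeval_C, aeval_X] at this
      rw [this]
      have hcoe : (algebraMap ℝ ℂ) ((gea a n M i).leadingCoeff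
          * ((gea a n M (i+1)).leadingCoeff)⁻¹)
          = (((gea a n M i).leadingCoeff * ((gea a n M (i+1)).leadingCoeff)⁻¹ : ℝ) : ℂ) := rfl
      rw [hcoe]
      ring
    · intro i hi
      exact mul_pos (hpos i (by omega)) (inv_pos.mpr (hpos (i+1) (by omega)))
    · intro j hj
      have hk : M - 1 - j < M := by omega
      have ht := gea_tail hM hMn ha0 hpos (M-1-j) hk
      have hidx : n - M + 1 + j = n - (M-1-j) := by omega
      simp only [hidx]
      have := congrArg (Polynomial.aeval w) ht
      rw [map_mul, map_pow, aeval_C, aeval_X] at this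
      rw [this]
      rfl
    · intro j hj
      exact hpos _ (by omega)
  rcases le_or_gt 0 z.arg with hz | hz
  · refine key z hz ?_ hroot
    rw [_root_.abs_of_nonneg hz] at hcon
    calc (M:ℝ) * z.arg ≤ (M:ℝ) * (Real.pi / M) :=
          mul_le_mul_of_nonneg_left hcon (le_of_lt hMR)
      _ = Real.pi := by field_simp
  · set w := (starRingEnd ℂ) z with hwdef
    have hargne : z.arg ≠ Real.pi := by
      intro h
      rw [h] at hz
      linarith [Real.pi_pos]
    have hw : w.arg = - z.arg := by
      rw [hwdef, Complex.arg_conj, if_neg hargne]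
    refine key w (by rw [hw]; linarith) ?_ ?_
    · rw [hw]
      rw [_root_.abs_of_neg hz] at hcon
      calc (M:ℝ) * (-z.arg) ≤ (M:ℝ) * (Real.pi / M) :=
            mul_le_mul_of_nonneg_left hcon (le_of_lt hMR)
        _ = Real.pi := by field_simp
    · have hconj : (∑ l ∈ Finset.range (n+1), (a l : ℂ) * w ^ (n-l))
          = (starRingEnd ℂ) (∑ l ∈ Finset.range (n+1), (a l : ℂ) * z ^ (n-l)) := by
        rw [map_sum]
        refine Finset.sum_congr rfl ?_
        intro l _
        rw [map_mul, map_pow, Complex.conj_ofReal]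
      rw [hconj, hroot, map_zero]
end

section
/- Let f be a real polynomial of degree n ≥ 2, let 2 ≤ M ≤ n, and let f_0, ..., f_n and d_0, ..., d_{n-M} be produced by the generalized Euclidean algorithm with step M applied to f. Then: (A) every nonzero f_i is arithmetic with difference M; (B) if f_i and f_{i+M} are both nonzero, then every exponent of a nonzero monomial of f_i is congruent modulo M to every exponent of a nonzero monomial of f_{i+M}; (C) for every 0 ≤ i ≤ n−M, either d_i = 0 or d_i is arithmetic with difference M and, for any exponents e, e', e'' of nonzero monomials of d_i, f_{i+1}, f_i respectively, e + e' ≡ e'' (mod M); (D) if f_i and f_{i+1} are both nonzero (0 ≤ i ≤ n−1), then deg f_i ≠ deg f_{i+1}. -/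
open Polynomial

/-- A real polynomial is arithmetic with difference `M` if the exponents of any two of its
nonzero monomials are congruent modulo `M`. -/
def IsArithmetic (M : ℕ) (p : Polynomial ℝ) : Prop :=
  ∀ e ∈ p.support, ∀ e' ∈ p.support, e % M = e' % M

private lemma gea_ex (M : ℕ) (q : Polynomial ℝ) (s : ℕ) (hq0 : q ≠ 0)
    (hq : ∀ e ∈ q.support, e ≡ s [MOD M]) :
    ∀ N (p : Polynomial ℝ) (r : ℕ), p.natDegree < N →
      (∀ e ∈ p.support, e ≡ r [MOD M]) →
      ∃ d rem : Polynomial ℝ, p = q * d + rem ∧ rem.degree < q.degree ∧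
        (∀ e ∈ d.support, e + s ≡ r [MOD M]) ∧ (∀ e ∈ rem.support, e ≡ r [MOD M]) := by
  intro N
  induction N with
  | zero => intro p r h; omega
  | succ N IH =>
    intro p r hN hp
    by_cases hdeg : p.degree < q.degree
    · exact ⟨0, p, by simp, hdeg, by simp, hp⟩
    · have hp0 : p ≠ 0 := by
        intro h; subst h
        exact hdeg (by simpa [degree_zero] using (bot_lt_iff_ne_bot.2 (degree_eq_bot.not.2 hq0)))
      have hqp : q.natDegree ≤ p.natDegree := natDegree_le_natDegree (le_of_not_gt hdeg)
      set k := p.natDegree - q.natDegree with hk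
      have hkq : k + q.natDegree = p.natDegree := by omega
      set c := p.leadingCoeff / q.leadingCoeff with hc
      have hc0 : c ≠ 0 := div_ne_zero (leadingCoeff_ne_zero.2 hp0) (leadingCoeff_ne_zero.2 hq0)
      set t : Polynomial ℝ := C c * X ^ k with ht
      have ht0 : t ≠ 0 := by simp [ht, hc0]
      have hrp : p.natDegree ≡ r [MOD M] := hp _ (natDegree_mem_support_of_nonzero hp0)
      have hrq : q.natDegree ≡ s [MOD M] := hq _ (natDegree_mem_support_of_nonzero hq0)
      have hks : k + s ≡ r [MOD M] := ((Nat.ModEq.refl k).add hrq.symm).trans (hkq ▸ hrp)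
      -- support of q*t
      have hqt_supp : ∀ e ∈ (q * t).support, e ≡ r [MOD M] := by
        intro e he
        rw [Polynomial.mem_support_iff, ht, ← mul_assoc, coeff_mul_X_pow'] at he
        by_cases hke : k ≤ e
        · rw [if_pos hke, coeff_mul_C] at he
          have hmem : e - k ∈ q.support := by
            rw [Polynomial.mem_support_iff]; intro h; simp [h] at he
          have h1 : e - k ≡ s [MOD M] := hq _ hmem
          have hek : e - k + k = e := by omega
          have h2 : e - k + k ≡ s + k [MOD M] := h1.add_right k
          rw [hek] at h2
          exact h2.trans ((Nat.add_comm s k) ▸ hks)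
        · simp [hke] at he
      -- degree facts
      have hdt : t.degree = (k : WithBot ℕ) := by rw [ht]; exact degree_C_mul_X_pow k hc0
      have hdqt : (q * t).degree = p.degree := by
        rw [degree_mul, hdt, degree_eq_natDegree hq0, degree_eq_natDegree hp0,
          ← Nat.cast_add, Nat.add_comm, hkq]
      have hlcqt : (q * t).leadingCoeff = p.leadingCoeff := by
        rw [leadingCoeff_mul, ht, leadingCoeff_mul, leadingCoeff_C, leadingCoeff_X_pow, mul_one,
          hc, mul_div_assoc']
        rw [mul_comm, mul_div_assoc, div_self (leadingCoeff_ne_zero.2 hq0), mul_one]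
      set p' : Polynomial ℝ := p - q * t with hp'
      have hdp' : p'.degree < p.degree := degree_sub_lt hdqt.symm hp0 hlcqt.symm
      have hp'_supp : ∀ e ∈ p'.support, e ≡ r [MOD M] := by
        intro e he
        have : e ∈ p.support ∪ (q * t).support := by
          simp only [Polynomial.mem_support_iff, Finset.mem_union, hp', coeff_sub] at *
          by_contra hcon; push_neg at hcon; simp [hcon.1, hcon.2] at he
        rcases Finset.mem_union.1 this with h | h
        · exact hp _ h
        · exact hqt_supp _ h
      by_cases hp'0 : p' = 0
      · refine ⟨t, 0, ?_, ?_, ?_, by simp⟩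
        · have : p - q * t = 0 := hp'0
          rw [← sub_eq_zero]; simpa using this
        · simpa [degree_zero] using (bot_lt_iff_ne_bot.2 (degree_eq_bot.not.2 hq0))
        · intro e he
          have := support_C_mul_X_pow' k c he
          simp only [Finset.mem_singleton] at this
          subst this; exact hks
      · have hNd : p'.natDegree < N := by
          have := natDegree_lt_natDegree hp'0 hdp'
          omega
        obtain ⟨d', rem', heq, hdr, hd', hrem'⟩ := IH p' r hNd hp'_supp
        refine ⟨t + d', rem', ?_, hdr, ?_, hrem'⟩
        · rw [mul_add]
          have : p' = p - q * t := rfl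
          rw [this] at heq; linear_combination heq
        · intro e he
          have : e ∈ t.support ∪ d'.support := by
            simp only [Polynomial.mem_support_iff, Finset.mem_union, coeff_add] at *
            by_contra hcon; push_neg at hcon; simp [hcon.1, hcon.2] at he
          rcases Finset.mem_union.1 this with h | h
          · have := support_C_mul_X_pow' k c h
            simp only [Finset.mem_singleton] at this
            subst this; exact hks
          · exact hd' _ h


private lemma gea_uniq (p q d rem : Polynomial ℝ) (hq0 : q ≠ 0)
    (heq : p = q * d + rem) (hdr : rem.degree < q.degree) :
    p / q = d ∧ p % q = rem := by
  have h1 : q * (p / q) + p % q = p := EuclideanDomain.div_add_mod p q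
  have h2 : (p % q).degree < q.degree := EuclideanDomain.mod_lt _ hq0
  have hd : d = p / q := by
    by_contra hne
    have hz : d - p / q ≠ 0 := sub_ne_zero.2 hne
    have hmul : q * (d - p / q) = (p % q) - rem := by
      linear_combination -heq - h1
    have hlt : (q * (d - p / q)).degree < q.degree :=
      hmul ▸ lt_of_le_of_lt (degree_sub_le _ _) (max_lt h2 hdr)
    have hge : q.degree ≤ (q * (d - p / q)).degree := by
      rw [degree_mul]
      calc q.degree = q.degree + 0 := (add_zero _).symm
        _ ≤ q.degree + (d - p / q).degree :=
          add_le_add (le_refl _) (zero_le_degree_iff.2 hz)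
    exact absurd hlt (not_lt_of_ge hge)
  subst hd
  constructor
  · rfl
  · exact add_left_cancel (h1.trans heq)

private lemma gea_key (M : ℕ) (p q : Polynomial ℝ) (r s : ℕ) (hq0 : q ≠ 0)
    (hp : ∀ e ∈ p.support, e ≡ r [MOD M]) (hq : ∀ e ∈ q.support, e ≡ s [MOD M]) :
    (∀ e ∈ (p % q).support, e ≡ r [MOD M]) ∧
    (∀ e ∈ (p / q).support, e + s ≡ r [MOD M]) := by
  obtain ⟨d, rem, heq, hdr, hd, hrem⟩ :=
    gea_ex M q s hq0 hq (p.natDegree + 1) p r (Nat.lt_succ_self _) hp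
  obtain ⟨h1, h2⟩ := gea_uniq p q d rem hq0 heq hdr
  exact ⟨h2 ▸ hrem, h1 ▸ hd⟩

private lemma gea_inv (a : ℕ → ℝ) (n M : ℕ) (hM : 2 ≤ M) :
    ∀ i, ∀ e ∈ (gea a n M i).support, e + i ≡ n [MOD M] := by
  intro i
  induction i using Nat.strong_induction_on with
  | _ i IH =>
    rw [gea]
    by_cases h : i < M
    · rw [dif_pos h]
      intro e he
      rw [Polynomial.mem_support_iff] at he
      by_contra hcon
      apply he
      rw [geaInit, finset_sum_coeff]
      apply Finset.sum_eq_zero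
      intro l hl
      by_cases hlM : l % M = i
      · rw [if_pos hlM, coeff_C_mul, coeff_X_pow]
        by_cases hel : e = n - l
        · exfalso; apply hcon
          have hln : l ≤ n := by simpa using Nat.lt_succ_iff.1 (Finset.mem_range.1 hl)
          have h1 : i ≡ l [MOD M] := by
            show i % M = l % M
            rw [Nat.mod_eq_of_lt h, hlM]
          have h2 : e + i ≡ e + l [MOD M] := Nat.ModEq.add_left e h1
          have h3 : e + l = n := by omega
          exact h3 ▸ h2
        · rw [if_neg hel, mul_zero]
      · rw [if_neg hlM]; simp
    · rw [dif_neg h, dif_pos hM]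
      have hiM : M ≤ i := le_of_not_gt h
      set p := gea a n M (i - M) with hp
      set q := gea a n M (i - M + 1) with hq
      have IH1 : ∀ e ∈ p.support, e + (i - M) ≡ n [MOD M] := IH (i - M) (by omega)
      have IH2 : ∀ e ∈ q.support, e + (i - M + 1) ≡ n [MOD M] := IH (i - M + 1) (by omega)
      have step : ∀ e : ℕ, e + (i - M) ≡ n [MOD M] → e + i ≡ n [MOD M] := by
        intro e hen
        have h1 : e + i = e + (i - M) + M := by omega
        have h2 : e + (i - M) + M ≡ e + (i - M) [MOD M] :=
          Nat.add_mod_right (e + (i - M)) M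
        rw [h1]; exact h2.trans hen
      by_cases hq0 : q = 0
      · rw [hq0]
        have : p % 0 = p := by simp [Polynomial.mod_def]
        rw [this]
        intro e he; exact step e (IH1 e he)
      · by_cases hp0 : p = 0
        · rw [hp0]
          have : (0 : Polynomial ℝ) % q = 0 := by simp [Polynomial.mod_def]
          rw [this]; simp
        · have hr : ∀ e ∈ p.support, e ≡ p.natDegree [MOD M] := by
            intro e he
            have h1 := IH1 e he
            have h2 := IH1 _ (natDegree_mem_support_of_nonzero hp0)
            exact Nat.ModEq.add_right_cancel' _ (h1.trans h2.symm)
          have hs : ∀ e ∈ q.support, e ≡ q.natDegree [MOD M] := by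
            intro e he
            have h1 := IH2 e he
            have h2 := IH2 _ (natDegree_mem_support_of_nonzero hq0)
            exact Nat.ModEq.add_right_cancel' _ (h1.trans h2.symm)
          obtain ⟨hmod, -⟩ := gea_key M p q p.natDegree q.natDegree hq0 hr hs
          intro e he
          have h1 : e ≡ p.natDegree [MOD M] := hmod e he
          exact step e ((h1.add_right (i - M)).trans
            (IH1 _ (natDegree_mem_support_of_nonzero hp0)))

/-- Properties of the generalized Euclidean algorithm with step `M`:
(A) every nonzero `f_i` is arithmetic with difference `M`;
(B) if `f_i` and `f_{i+M}` are both nonzero their residues agree;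
(C) each quotient `d_i = f_i / f_{i+1}` is zero or arithmetic, with residue the difference
of the residues of `f_i` and `f_{i+1}`;
(D) nonzero consecutive `f_i`, `f_{i+1}` have distinct degrees. -/
theorem gen_euclid_arithmetic_properties
    (n M : ℕ) (a : ℕ → ℝ) (hn : 2 ≤ n) (ha0 : a 0 ≠ 0) (hM : 2 ≤ M) (hMn : M ≤ n) :
    (∀ i ≤ n, gea a n M i ≠ 0 → IsArithmetic M (gea a n M i)) ∧
    (∀ i, i + M ≤ n → gea a n M i ≠ 0 → gea a n M (i + M) ≠ 0 →
      ∀ e ∈ (gea a n M i).support, ∀ e' ∈ (gea a n M (i + M)).support, e % M = e' % M) ∧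
    (∀ i ≤ n - M, gea a n M i / gea a n M (i + 1) = 0 ∨
      (IsArithmetic M (gea a n M i / gea a n M (i + 1)) ∧
        ∀ e ∈ (gea a n M i / gea a n M (i + 1)).support,
          ∀ e' ∈ (gea a n M (i + 1)).support, ∀ e'' ∈ (gea a n M i).support,
            (e + e') % M = e'' % M)) ∧
    (∀ i, i + 1 ≤ n → gea a n M i ≠ 0 → gea a n M (i + 1) ≠ 0 →
      (gea a n M i).degree ≠ (gea a n M (i + 1)).degree) := by
  have inv := gea_inv a n M hM
  have cancel : ∀ i : ℕ, ∀ e e' : ℕ, e + i ≡ n [MOD M] → e' + i ≡ n [MOD M] →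
      e ≡ e' [MOD M] := by
    intro i e e' h1 h2
    exact Nat.ModEq.add_right_cancel' _ (h1.trans h2.symm)
  refine ⟨?_, ?_, ?_, ?_⟩
  · -- (A)
    intro i _ _ e he e' he'
    exact cancel i e e' (inv i e he) (inv i e' he')
  · -- (B)
    intro i _ _ _ e he e' he'
    have h1 := inv i e he
    have h2 := inv (i + M) e' he'
    have h3 : e' + i ≡ n [MOD M] := by
      have : e' + (i + M) ≡ e' + i [MOD M] := by
        have := Nat.add_mod_right (e' + i) M
        show (e' + (i + M)) % M = (e' + i) % M
        rw [← this]; ring_nf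
      exact this.symm.trans h2
    exact cancel i e e' h1 h3
  · -- (C)
    intro i _
    set p := gea a n M i with hpdef
    set q := gea a n M (i + 1) with hqdef
    by_cases hq0 : q = 0
    · left; rw [hq0]; simp [Polynomial.div_def]
    by_cases hp0 : p = 0
    · left; rw [hp0]; simp [Polynomial.div_def]
    right
    have hr : ∀ e ∈ p.support, e ≡ p.natDegree [MOD M] := fun e he =>
      cancel i e p.natDegree (inv i e he) (inv i _ (natDegree_mem_support_of_nonzero hp0))
    have hs : ∀ e ∈ q.support, e ≡ q.natDegree [MOD M] := fun e he =>
      cancel (i + 1) e q.natDegree (inv (i + 1) e he)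
        (inv (i + 1) _ (natDegree_mem_support_of_nonzero hq0))
    obtain ⟨-, hdiv⟩ := gea_key M p q p.natDegree q.natDegree hq0 hr hs
    constructor
    · intro e he e' he'
      have h1 := hdiv e he
      have h2 := hdiv e' he'
      exact Nat.ModEq.add_right_cancel' _ (h1.trans h2.symm)
    · intro e he e' he' e'' he''
      have h1 : e + e' ≡ e + q.natDegree [MOD M] := (hs e' he').add_left e
      have h2 : e + q.natDegree ≡ p.natDegree [MOD M] := hdiv e he
      have h3 : p.natDegree ≡ e'' [MOD M] := (hr e'' he'').symm
      exact (h1.trans h2).trans h3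
  · -- (D)
    intro i _ hp0 hq0 hdeq
    have hnd : (gea a n M i).natDegree = (gea a n M (i + 1)).natDegree :=
      natDegree_eq_of_degree_eq hdeq
    have h1 := inv i _ (natDegree_mem_support_of_nonzero hp0)
    have h2 := inv (i + 1) _ (natDegree_mem_support_of_nonzero hq0)
    rw [← hnd] at h2
    set d := (gea a n M i).natDegree
    have h3 : d + i ≡ d + (i + 1) [MOD M] := h1.trans h2.symm
    have h4 : 0 ≡ 1 [MOD M] := by
      have := Nat.ModEq.add_right_cancel' (d + i) (by
        show 0 + (d + i) ≡ 1 + (d + i) [MOD M]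
        have : 0 + (d + i) = d + i := by ring
        rw [this]
        have h5 : 1 + (d + i) = d + (i + 1) := by ring
        rw [h5]; exact h3)
      exact this
    have : (0 : ℕ) % M = 1 % M := h4
    rw [Nat.zero_mod, Nat.mod_eq_of_lt (by omega : 1 < M)] at this
    exact absurd this.symm one_ne_zero
end

section
/- Let f(x) = a_0 x^n + ... + a_n be a real polynomial of degree n with a_0 > 0 and let 2 ≤ M ≤ n. Suppose that all n special minors Δ_p, p = 1, ..., n, of the generalized Hurwitz matrix H_M(f) are strictly positive. Then: (a) H_M(f) is totally nonnegative; (b) all the coefficients a_0, a_1, ..., a_n of f are strictly positive; (c) a minor of H_M(f) on rows i_1 < ... < i_p and columns j_1 < ... < j_p is strictly positive if and only if all of its diagonal entries a_{M j_l − i_l}, l = 1, ..., p, are strictly positive. -/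
open Polynomial

/-- Entry `(i,j)` (0-based) of the generalized Hurwitz matrix `H_M(f) = (a_{Mj-i})_{i,j≥1}`,
with `a_k := 0` for `k < 0` and `k > n`. -/
def hEntry (a : ℕ → ℝ) (n M : ℕ) (i j : ℕ) : ℝ :=
  if i + 1 ≤ M * (j + 1) ∧ M * (j + 1) - (i + 1) ≤ n then a (M * (j + 1) - (i + 1)) else 0

/-- Total nonnegativity of an infinite matrix: every minor is nonnegative. -/
def IsTotallyNonneg (A : ℕ → ℕ → ℝ) : Prop :=
  ∀ (p : ℕ) (r c : Fin p → ℕ), StrictMono r → StrictMono c →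
    0 ≤ Matrix.det (Matrix.of fun s t : Fin p => A (r s) (c t))

/-- The special minor `H_M(k,r)` on rows `k, k+1, ..., k+r-1` and columns `1, ..., r`
(1-based indexing). -/
noncomputable def specialMinor (a : ℕ → ℝ) (n M k r : ℕ) : ℝ :=
  Matrix.det (Matrix.of fun s t : Fin r => hEntry a n M (k - 1 + s) t)

open Matrix Finset

lemma perm_eq_one_of_strictMono {p : ℕ} (σ : Equiv.Perm (Fin p)) (h : StrictMono σ) :
    σ = 1 := by
  have h2 : StrictMono ⇑σ.symm := by
    intro x y hxy
    by_contra hc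
    push_neg at hc
    have h4 := h.monotone hc
    simp only [Equiv.apply_symm_apply] at h4
    exact absurd hxy (not_lt.2 h4)
  haveI : WellFoundedLT (Fin p) := Finite.to_wellFoundedLT
  ext x
  have h1 : (x : Fin p) ≤ σ x := h.le_apply
  have h3 : σ x ≤ x := by
    have h5 : σ x ≤ σ.symm (σ x) := h2.le_apply
    simpa using h5
  simp [le_antisymm h3 h1]

lemma perm_exists_inversion {p : ℕ} (σ : Equiv.Perm (Fin p)) (h : σ ≠ 1) :
    ∃ s t : Fin p, s < t ∧ σ t < σ s := by
  by_contra hc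
  push_neg at hc
  apply h
  apply perm_eq_one_of_strictMono
  intro x y hxy
  exact lt_of_le_of_ne (hc x y hxy) (fun he => hxy.ne (σ.injective he))

/-- If the nonzero pattern of `A` has no inversions, `det A` is the product of the diagonal. -/
lemma det_eq_prod_diag {p : ℕ} (A : Matrix (Fin p) (Fin p) ℝ)
    (h : ∀ s t s' t' : Fin p, s < s' → t' < t → A s t ≠ 0 → A s' t' = 0) :
    A.det = ∏ s, A s s := by
  rw [Matrix.det_apply]
  rw [Finset.sum_eq_single (1 : Equiv.Perm (Fin p))]
  · simp
  · intro σ _ hσ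
    obtain ⟨s, t, hst, hinv⟩ := perm_exists_inversion σ hσ
    by_cases h0 : A (σ t) t = 0
    · have hz : (∏ i : Fin p, A (σ i) i) = 0 :=
        Finset.prod_eq_zero (f := fun i => A (σ i) i) (Finset.mem_univ t) h0
      rw [hz]; simp
    · have hz : (∏ i : Fin p, A (σ i) i) = 0 :=
        Finset.prod_eq_zero (f := fun i => A (σ i) i) (Finset.mem_univ s)
          (h (σ t) t (σ s) s hinv hst h0)
      rw [hz]; simp
  · simp

/-- Zero block in the upper right corner of total size `p+1` kills the determinant. -/
lemma det_eq_zero_of_block {p : ℕ} (A : Matrix (Fin p) (Fin p) ℝ) (l : Fin p)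
    (h : ∀ s t : Fin p, s ≤ l → l ≤ t → A s t = 0) : A.det = 0 := by
  rw [Matrix.det_apply]
  apply Finset.sum_eq_zero
  intro σ _
  have : ∃ t : Fin p, l ≤ t ∧ σ t ≤ l := by
    by_contra hc
    push_neg at hc
    have hmaps : ∀ x ∈ Finset.Ici l, σ x ∈ Finset.Ioi l := by
      intro x hx
      simp only [Finset.mem_Ici] at hx
      simpa using hc x hx
    have hcard := Finset.card_le_card_of_injOn σ hmaps (σ.injective.injOn)
    rw [Fin.card_Ici, Fin.card_Ioi] at hcard
    omega
  obtain ⟨t, hlt, hstl⟩ := this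
  have hz : (∏ i : Fin p, A (σ i) i) = 0 :=
    Finset.prod_eq_zero (f := fun i => A (σ i) i) (Finset.mem_univ t) (h (σ t) t hstl hlt)
  rw [hz]; simp

open Matrix Finset

/-- Determinant is unchanged by adding to certain rows a multiple of the previous row,
provided the used rows are themselves unmodified. -/
lemma det_rowops {r : ℕ} (v : ℕ → Fin r → ℝ) (E : ℕ → ℝ) (k : ℕ)
    (h1 : ∀ s : Fin r, E (k + s) ≠ 0 → 1 ≤ s.val)
    (h2 : ∀ i, E i ≠ 0 → E (i - 1) = 0) :
    Matrix.det (Matrix.of fun s t : Fin r => v (k + s) t + E (k + s) * v (k + s - 1) t)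
      = Matrix.det (Matrix.of fun s t : Fin r => v (k + s) t) := by
  classical
  suffices H : ∀ S : Finset (Fin r),
      Matrix.det (Matrix.of fun s t : Fin r =>
        v (k + s) t + (if s ∈ S then E (k + s) else 0) * v (k + s - 1) t)
        = Matrix.det (Matrix.of fun s t : Fin r => v (k + s) t) by
    have hu := H Finset.univ
    rw [← hu]
    congr 1
    ext s t
    simp
  intro S
  induction S using Finset.induction_on with
  | empty =>
    congr 1
    ext s t
    simp
  | @insert a S ha ih =>
    by_cases hE : E (k + a) = 0
    · rw [← ih]
      congr 1
      ext s t
      by_cases hsa : s = a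
      · simp [hsa, hE]
      · simp [Finset.mem_insert, hsa]
    · have ha1 : 1 ≤ a.val := h1 a hE
      set Base : Matrix (Fin r) (Fin r) ℝ := Matrix.of fun s t : Fin r =>
        v (k + s) t + (if s ∈ S then E (k + s) else 0) * v (k + s - 1) t with hBase
      set a' : Fin r := ⟨a.val - 1, by omega⟩ with ha'
      have hne : a ≠ a' := by
        simp only [ha', Ne, Fin.ext_iff]
        omega
      have hEa' : E (k + a'.val) = 0 := by
        have := h2 (k + a.val) hE
        have heq : k + a'.val = k + a.val - 1 := by simp [ha']; omega
        rw [heq]; exact this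
      have hrowa' : Base a' = fun t => v (k + a'.val) t := by
        funext t
        simp [hBase, hEa']
      have hMat : (Matrix.of fun s t : Fin r =>
          v (k + s) t + (if s ∈ insert a S then E (k + s) else 0) * v (k + s - 1) t)
          = Matrix.updateRow Base a (Base a + E (k + a.val) • Base a') := by
        ext s t
        by_cases hsa : s = a
        · rw [hsa, Matrix.updateRow_self]
          simp only [Pi.add_apply, Pi.smul_apply, smul_eq_mul, hrowa']
          simp only [hBase, Matrix.of_apply, if_pos (Finset.mem_insert_self a S),
            if_neg ha]
          have hkk : k + a'.val = k + a.val - 1 := by simp only [ha']; omega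
          rw [hkk]
          ring
        · rw [Matrix.updateRow_ne hsa]
          simp only [hBase, Matrix.of_apply, Finset.mem_insert]
          congr 2
          simp [hsa]
      rw [hMat, Matrix.det_updateRow_add_smul_self Base hne (E (k + a.val))]
      exact ih

/-- Expansion of a determinant whose rows decompose as sums of two rows of another matrix. -/
lemma det_expand_rows {p : ℕ} (A B : ℕ → ℕ → ℝ) (w : ℕ → ℝ)
    (hAB : ∀ i j, A i j = B (i+1) j + w i * B i j)
    (rows cols : Fin p → ℕ) :
    Matrix.det (Matrix.of fun s t : Fin p => A (rows s) (cols t)) =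
      ∑ ε : Fin p → Bool, (∏ s, (if ε s then w (rows s) else 1)) *
        Matrix.det (Matrix.of fun s t : Fin p =>
          B (if ε s then rows s else rows s + 1) (cols t)) := by
  classical
  set g : Fin p → Bool → (Fin p → ℝ) :=
    fun s e => (if e then w (rows s) else 1) •
      (fun t => B (if e then rows s else rows s + 1) (cols t)) with hg
  have h2 : ∀ (C : Matrix (Fin p) (Fin p) ℝ),
      C.det = Matrix.detRowAlternating.toMultilinearMap C := fun _ => rfl
  have h1 : (Matrix.of fun s t : Fin p => A (rows s) (cols t)) = fun s => ∑ e : Bool, g s e := by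
    funext s t
    have h := hAB (rows s) (cols t)
    simp only [Matrix.of_apply, hg, Fintype.sum_bool, Pi.add_apply, Pi.smul_apply,
      smul_eq_mul, eq_self_iff_true, if_true, Bool.false_eq_true, if_false, one_mul]
    rw [h]
    ring
  rw [h2, h1, MultilinearMap.map_sum]
  apply Finset.sum_congr rfl
  intro ε _
  have h3 : (fun s => g s (ε s)) = fun s => (if ε s then w (rows s) else 1) •
      (fun t => B (if ε s then rows s else rows s + 1) (cols t)) := rfl
  rw [h3, MultilinearMap.map_smul_univ, smul_eq_mul]
  congr 1


/-- `a` extended by zero beyond degree `n`. -/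
noncomputable def aext (a : ℕ → ℝ) (n : ℕ) : ℕ → ℝ := fun q => if q ≤ n then a q else 0

/-- Coefficients of the polynomial obtained by one step of the generalized Euclidean
algorithm. -/
noncomputable def bseq (M n : ℕ) (a : ℕ → ℝ) : ℕ → ℝ := fun k =>
  if (k + 1) % M = 0 then aext a n (k + 1) - a 0 / a 1 * aext a n (k + 2)
  else aext a n (k + 1)

lemma bval_mod (M n : ℕ) (a : ℕ → ℝ) (hM : 2 ≤ M) {q : ℕ} (hq : M ∣ q) (h1 : 1 ≤ q) :
    bseq M n a (q - 1) = aext a n q - a 0 / a 1 * aext a n (q + 1) := by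
  have h2 : q - 1 + 1 = q := by omega
  have h3 : q - 1 + 2 = q + 1 := by omega
  unfold bseq
  rw [h2, h3, if_pos (Nat.dvd_iff_mod_eq_zero.mp hq)]

lemma bval_nmod (M n : ℕ) (a : ℕ → ℝ) (hM : 2 ≤ M) {k : ℕ} (hq : ¬ M ∣ (k + 1)) :
    bseq M n a k = aext a n (k + 1) := by
  unfold bseq
  rw [if_neg (fun h => hq (Nat.dvd_iff_mod_eq_zero.mpr h))]

/-- Key recursion: the generalized Hurwitz matrix of `a` (degree `n+1`) in terms of the one
of `bseq` (degree `n`). -/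
lemma hEntry_rec (M n : ℕ) (a : ℕ → ℝ) (hM : 2 ≤ M) (ha1 : a 1 ≠ 0) (i j : ℕ) :
    hEntry a (n+1) M i j = hEntry (bseq M (n+1) a) n M (i+1) j
      + (if M ∣ (i+1) then a 0 / a 1 else 0) * hEntry (bseq M (n+1) a) n M i j := by
  have hMJ : M ∣ M * (j + 1) := Dvd.intro _ rfl
  simp only [hEntry]
  set J := M * (j + 1) with hJdef
  have hJM : M ≤ J := Nat.le_mul_of_pos_right M (by omega)
  by_cases hle : i + 1 ≤ J
  · set q := J - (i + 1) with hqdef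
    by_cases hdvd : M ∣ (i + 1)
    · rw [if_pos hdvd]
      have hqd : M ∣ q := hqdef ▸ Nat.dvd_sub hMJ hdvd
      by_cases hq0 : q = 0
      · have hJe : J = i + 1 := by omega
        rw [if_pos (⟨hle, by omega⟩ : i + 1 ≤ J ∧ q ≤ n + 1),
          if_neg (by omega : ¬(i + 1 + 1 ≤ J ∧ J - (i + 1 + 1) ≤ n)),
          if_pos (⟨hle, by omega⟩ : i + 1 ≤ J ∧ q ≤ n)]
        have hb0 : bseq M (n+1) a q = a 1 := by
          have hnd : ¬ M ∣ (0 + 1 : ℕ) := by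
            intro h
            have := Nat.le_of_dvd (by norm_num) h
            omega
          rw [hq0, bval_nmod M (n+1) a hM hnd]
          unfold aext
          rw [if_pos (by omega : (0:ℕ) + 1 ≤ n + 1)]
        rw [hb0, hq0, div_mul_cancel₀ _ ha1]
        ring
      · by_cases hqn : q ≤ n + 1
        · rw [if_pos ⟨hle, hqn⟩]
          have hi2 : i + 1 + 1 ≤ J := by omega
          have hrw : J - (i + 1 + 1) = q - 1 := by omega
          rw [if_pos (⟨hi2, by omega⟩ : i + 1 + 1 ≤ J ∧ J - (i + 1 + 1) ≤ n), hrw,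
            bval_mod M (n+1) a hM hqd (by omega)]
          have hnd1 : ¬ M ∣ (q + 1) := by
            intro h
            have h1 : M ∣ (q + 1 - q) := Nat.dvd_sub h hqd
            simp at h1
            omega
          by_cases hqn' : q ≤ n
          · rw [if_pos (⟨hle, hqn'⟩ : i + 1 ≤ J ∧ q ≤ n)]
            have hbq : bseq M (n+1) a q = aext a (n+1) (q + 1) := by
              rw [bval_nmod M (n+1) a hM hnd1]
            rw [hbq]
            unfold aext
            rw [if_pos hqn]
            ring
          · rw [if_neg (by omega : ¬(i + 1 ≤ J ∧ q ≤ n))]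
            unfold aext
            rw [if_pos hqn, if_neg (by omega : ¬(q + 1 ≤ n + 1))]
            ring
        · rw [if_neg (by omega : ¬(i + 1 ≤ J ∧ q ≤ n + 1)),
            if_neg (by omega : ¬(i + 1 + 1 ≤ J ∧ J - (i + 1 + 1) ≤ n)),
            if_neg (by omega : ¬(i + 1 ≤ J ∧ q ≤ n))]
          ring
    · rw [if_neg hdvd]
      have hq0 : q ≠ 0 := by
        intro h
        apply hdvd
        have he : i + 1 = J := by omega
        rw [he]; exact hMJ
      by_cases hqn : q ≤ n + 1
      · rw [if_pos ⟨hle, hqn⟩,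
          if_pos (⟨by omega, by omega⟩ : i + 1 + 1 ≤ J ∧ J - (i + 1 + 1) ≤ n)]
        have hrw : J - (i + 1 + 1) = q - 1 := by omega
        have hnd : ¬ M ∣ (q - 1 + 1) := by
          have he : q - 1 + 1 = q := by omega
          rw [he]
          intro hd
          apply hdvd
          have he2 : i + 1 = J - q := by omega
          rw [he2]; exact Nat.dvd_sub hMJ hd
        rw [hrw, bval_nmod M (n+1) a hM hnd]
        have he : q - 1 + 1 = q := by omega
        rw [he]
        unfold aext
        rw [if_pos hqn]
        ring
      · rw [if_neg (by omega : ¬(i + 1 ≤ J ∧ q ≤ n + 1)),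
          if_neg (by omega : ¬(i + 1 + 1 ≤ J ∧ J - (i + 1 + 1) ≤ n)),
          if_neg (by omega : ¬(i + 1 ≤ J ∧ q ≤ n))]
        ring
  · rw [if_neg (by omega : ¬(i + 1 ≤ J ∧ J - (i + 1) ≤ n + 1)),
      if_neg (by omega : ¬(i + 1 + 1 ≤ J ∧ J - (i + 1 + 1) ≤ n)),
      if_neg (by omega : ¬(i + 1 ≤ J ∧ J - (i + 1) ≤ n))]
    ring

/-- The shift identity for special minors with `M ∤ k`. -/
lemma shift_minor (M n : ℕ) (a : ℕ → ℝ) (hM : 2 ≤ M) (ha1 : a 1 ≠ 0)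
    {k : ℕ} (hk1 : 1 ≤ k) (hkM : ¬ M ∣ k) (r : ℕ) :
    specialMinor a (n+1) M k r = specialMinor (bseq M (n+1) a) n M (k+1) r := by
  unfold specialMinor
  have hE : ∀ i : ℕ, 1 ≤ i →
      (if M ∣ i then a 0 / a 1 else 0) = (if M ∣ i ∧ i ≠ 0 then a 0 / a 1 else 0) := by
    intro i hi
    by_cases h : M ∣ i
    · rw [if_pos h, if_pos ⟨h, by omega⟩]
    · rw [if_neg h, if_neg (by tauto)]
  have hstep : ∀ (s t : Fin r), hEntry a (n+1) M (k - 1 + s) t =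
      hEntry (bseq M (n+1) a) n M (k + s) t
        + (if M ∣ (k + s.val) ∧ (k + s.val) ≠ 0 then a 0 / a 1 else 0) *
          hEntry (bseq M (n+1) a) n M (k + s - 1) t := by
    intro s t
    have h1 : (k - 1 + s.val) + 1 = k + s.val := by omega
    have h2 : k + s.val - 1 = k - 1 + s.val := by omega
    have h3 := hEntry_rec M n a hM ha1 (k - 1 + s) t
    rw [h1] at h3
    rw [h3, h2, hE (k + s.val) (by omega)]
  have hdvdfact : ∀ i : ℕ, (M ∣ i ∧ i ≠ 0) → ¬ (M ∣ (i-1) ∧ (i-1) ≠ 0) := by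
    intro i ⟨hd, hne⟩ ⟨hd2, hne2⟩
    have h1 : M ∣ (i - (i-1)) := Nat.dvd_sub hd hd2
    have h2 : i - (i - 1) = 1 := by
      have := Nat.le_of_dvd (by omega) hd
      omega
    rw [h2] at h1
    have := Nat.le_of_dvd (by norm_num) h1
    omega
  calc Matrix.det (Matrix.of fun s t : Fin r => hEntry a (n+1) M (k - 1 + s) t)
      = Matrix.det (Matrix.of fun s t : Fin r =>
          (fun i => fun u : Fin r => hEntry (bseq M (n+1) a) n M i u) (k + s) t
          + (if M ∣ (k + s.val) ∧ (k + s.val) ≠ 0 then a 0 / a 1 else 0) *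
            (fun i => fun u : Fin r => hEntry (bseq M (n+1) a) n M i u) (k + s - 1) t) := by
        congr 1
        ext s t
        exact hstep s t
    _ = Matrix.det (Matrix.of fun s t : Fin r =>
          (fun i => fun u : Fin r => hEntry (bseq M (n+1) a) n M i u) (k + s) t) := by
        apply det_rowops (fun i => fun u : Fin r => hEntry (bseq M (n+1) a) n M i u)
          (fun i => if M ∣ i ∧ i ≠ 0 then a 0 / a 1 else 0) k
        · intro s hs
          by_contra hc
          have hs0 : s.val = 0 := by omega
          rw [hs0] at hs
          simp only [Nat.add_zero] at hs
          by_cases h : M ∣ k ∧ k ≠ 0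
          · exact hkM h.1
          · rw [if_neg h] at hs; exact hs rfl
        · intro i hi
          by_cases h : M ∣ i ∧ i ≠ 0
          · rw [if_neg (hdvdfact i h)]
          · rw [if_neg h] at hi; exact absurd rfl hi
    _ = Matrix.det (Matrix.of fun s t : Fin r =>
          hEntry (bseq M (n+1) a) n M (k + 1 - 1 + s) t) := by
        congr 1

lemma hEntry_shift (a : ℕ → ℝ) (n M : ℕ) (hM : 2 ≤ M) (s t : ℕ) (hs : 1 ≤ s) :
    hEntry a n M (M - 1 + s) (t + 1) = hEntry a n M (s - 1) t := by
  simp only [hEntry]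
  have hmm : M * (t + 1 + 1) = M * (t + 1) + M := by ring
  have hcond : (M - 1 + s + 1 ≤ M * (t+1+1) ∧ M * (t+1+1) - (M - 1 + s + 1) ≤ n)
      ↔ (s - 1 + 1 ≤ M * (t+1) ∧ M * (t+1) - (s - 1 + 1) ≤ n) := by omega
  by_cases h : s - 1 + 1 ≤ M * (t+1) ∧ M * (t+1) - (s - 1 + 1) ≤ n
  · rw [if_pos (hcond.mpr h), if_pos h]
    congr 1
    omega
  · rw [if_neg (fun hh => h (hcond.mp hh)), if_neg h]

/-- The dropping identity for special minors at `k = M-1`. -/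
lemma drop_minor (M n : ℕ) (a : ℕ → ℝ) (hM : 2 ≤ M) (ha1 : a 1 ≠ 0) {r : ℕ} (hr : 1 ≤ r) :
    specialMinor a (n+1) M (M-1) (r+1) = a 1 * specialMinor (bseq M (n+1) a) n M 1 r := by
  set b := bseq M (n+1) a with hbdef
  set c := a 0 / a 1 with hcdef
  -- entry values in column 0
  have hv10 : hEntry a (n+1) M (M-1) 0 = a 0 := by
    simp only [hEntry]
    have h1 : M * (0 + 1) = M := by ring
    rw [if_pos (by omega : M - 1 + 1 ≤ M * (0+1) ∧ M * (0+1) - (M - 1 + 1) ≤ n + 1)]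
    congr 1
    omega
  have hv00 : hEntry a (n+1) M (M-2) 0 = a 1 := by
    simp only [hEntry]
    have h1 : M * (0 + 1) = M := by ring
    rw [if_pos (by omega : M - 2 + 1 ≤ M * (0+1) ∧ M * (0+1) - (M - 2 + 1) ≤ n + 1)]
    congr 1
    omega
  have hvs0 : ∀ s : ℕ, 2 ≤ s → hEntry a (n+1) M (M-2+s) 0 = 0 := by
    intro s hs
    simp only [hEntry]
    rw [if_neg]
    have h1 : M * (0 + 1) = M := by ring
    omega
  -- the new row 1 after the row operation
  have hrow1 : ∀ t : ℕ, 1 ≤ t →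
      hEntry a (n+1) M (M-1) t - c * hEntry a (n+1) M (M-2) t = hEntry b n M 0 (t-1) := by
    intro t ht
    have hMt : M ∣ M * t := Dvd.intro t rfl
    have h1 : M * (t + 1) = M * t + M := by ring
    have hMlet : M ≤ M * t := Nat.le_mul_of_pos_right M (by omega)
    have hi3 : M * (t - 1 + 1) = M * t := by congr 1; omega
    simp only [hEntry]
    rw [hi3]
    have hgl : M - 1 + 1 ≤ M * (t + 1) := by omega
    have hgl2 : M - 2 + 1 ≤ M * (t + 1) := by omega
    have hia : M * (t + 1) - (M - 1 + 1) = M * t := by omega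
    have hib : M * (t + 1) - (M - 2 + 1) = M * t + 1 := by omega
    rw [hia, hib]
    have hbv : b (M * t - 1) = aext a (n+1) (M * t) - c * aext a (n+1) (M * t + 1) :=
      bval_mod M (n+1) a hM hMt (by omega)
    by_cases hle : M * t ≤ n + 1
    · rw [if_pos ⟨hgl, hle⟩, if_pos (by omega : 0 + 1 ≤ M * t ∧ M * t - 1 ≤ n), hbv]
      unfold aext
      rw [if_pos hle]
      by_cases hle2 : M * t + 1 ≤ n + 1
      · rw [if_pos ⟨hgl2, hle2⟩, if_pos hle2]
      · rw [if_neg (by omega : ¬(M - 2 + 1 ≤ M * (t+1) ∧ M * t + 1 ≤ n + 1)),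
          if_neg hle2]
    · rw [if_neg (by omega : ¬(M - 1 + 1 ≤ M * (t+1) ∧ M * t ≤ n + 1)),
        if_neg (by omega : ¬(M - 2 + 1 ≤ M * (t+1) ∧ M * t + 1 ≤ n + 1)),
        if_neg (by omega : ¬(0 + 1 ≤ M * t ∧ M * t - 1 ≤ n))]
      ring
  have hval1 : ((1 : Fin (r+1)) : ℕ) = 1 := by
    simp only [Fin.val_one']
    exact Nat.mod_eq_of_lt (by omega)
  have h10 : (1 : Fin (r+1)) ≠ 0 := by
    intro h
    have := congrArg Fin.val h
    rw [hval1, Fin.val_zero] at this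
    omega
  set P0 : Matrix (Fin (r+1)) (Fin (r+1)) ℝ :=
    Matrix.of (fun s t : Fin (r+1) => hEntry a (n+1) M (M - 1 - 1 + s) t) with hP0
  set P' : Matrix (Fin (r+1)) (Fin (r+1)) ℝ :=
    Matrix.of (fun s t : Fin (r+1) =>
      if s = 1 then (if t.val = 0 then 0 else hEntry b n M 0 (t.val - 1))
      else hEntry a (n+1) M (M - 2 + s.val) t) with hP'
  have hPP' : Matrix.updateRow P0 1 (P0 1 + (-c) • P0 0) = P' := by
    ext s t
    by_cases hs : s = 1
    · rw [hs, Matrix.updateRow_self]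
      have hL1 : P0 1 t = hEntry a (n+1) M (M-1) ↑t := by
        show hEntry a (n+1) M (M - 1 - 1 + ((1 : Fin (r+1)) : ℕ)) ↑t = _
        rw [hval1, show M - 1 - 1 + 1 = M - 1 from by omega]
      have hL0 : P0 0 t = hEntry a (n+1) M (M-2) ↑t := by
        show hEntry a (n+1) M (M - 1 - 1 + ((0 : Fin (r+1)) : ℕ)) ↑t = _
        rw [show ((0 : Fin (r+1)) : ℕ) = 0 from rfl,
          show M - 1 - 1 + 0 = M - 2 from by omega]
      have hR : P' 1 t = if t.val = 0 then 0 else hEntry b n M 0 (t.val - 1) := by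
        show (if (1 : Fin (r+1)) = 1 then _ else _) = _
        rw [if_pos rfl]
      rw [hR]
      show P0 1 t + (-c) • P0 0 t = _
      rw [smul_eq_mul, hL1, hL0]
      by_cases ht : t.val = 0
      · rw [if_pos ht]
        have ht' : t = 0 := by
          apply Fin.ext
          rw [ht, Fin.val_zero]
        rw [ht', show ((0 : Fin (r+1)) : ℕ) = 0 from rfl, hv10, hv00, hcdef]
        field_simp
        ring
      · rw [if_neg ht]
        have h := hrow1 t.val (by omega)
        rw [← h]
        ring
    · rw [Matrix.updateRow_ne hs]
      simp only [hP0, hP', Matrix.of_apply, if_neg hs]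
      rw [show M - 1 - 1 + s.val = M - 2 + s.val from by omega]
  have hdetP0 : P0.det = P'.det := by
    rw [← hPP', Matrix.det_updateRow_add_smul_self P0 h10 (-c)]
  -- expand along column 0
  have hP'00 : P' 0 0 = a 1 := by
    have h01 : (0 : Fin (r+1)) ≠ 1 := fun h => h10 h.symm
    simp only [hP', Matrix.of_apply, if_neg h01, Fin.val_zero, Nat.add_zero]
    exact hv00
  have hcol : ∀ i : Fin (r+1), i ≠ 0 → P' i 0 = 0 := by
    intro i hi
    by_cases hi1 : i = 1
    · simp only [hP', Matrix.of_apply, if_pos hi1, Fin.val_zero]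
      simp
    · have hiv : 2 ≤ i.val := by
        have h0 : i.val ≠ 0 := fun h => hi (Fin.ext (by rw [h, Fin.val_zero]))
        have h1 : i.val ≠ 1 := fun h => hi1 (Fin.ext (by rw [h, hval1]))
        omega
      simp only [hP', Matrix.of_apply, if_neg hi1, Fin.val_zero]
      exact hvs0 i.val hiv
  have hdetP' : P'.det = a 1 * (P'.submatrix Fin.succ Fin.succ).det := by
    rw [Matrix.det_succ_column_zero]
    rw [Finset.sum_eq_single (0 : Fin (r+1))]
    · rw [hP'00, Fin.succAbove_zero, Fin.val_zero, pow_zero, one_mul]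
    · intro i _ hi
      rw [hcol i hi]
      ring
    · intro h
      exact absurd (Finset.mem_univ _) h
  -- identify the submatrix with the b-matrix after row operations
  have hEcoef : ∀ i : ℕ, 1 ≤ i →
      (if M ∣ i then c else 0) = (if M ∣ i ∧ i ≠ 0 then c else 0) := by
    intro i hi
    by_cases h : M ∣ i
    · rw [if_pos h, if_pos ⟨h, by omega⟩]
    · rw [if_neg h, if_neg (by tauto)]
  have hQ : P'.submatrix Fin.succ Fin.succ = Matrix.of (fun s t : Fin r =>
      (fun i => fun u : Fin r => hEntry b n M i u) (0 + s) t
      + (if M ∣ (0 + s.val) ∧ (0 + s.val) ≠ 0 then c else 0) *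
        (fun i => fun u : Fin r => hEntry b n M i u) (0 + s - 1) t) := by
    ext s t
    simp only [Matrix.submatrix_apply, Matrix.of_apply, hP']
    by_cases hs : s.val = 0
    · have hs1 : (s.succ : Fin (r+1)) = 1 := by
        apply Fin.ext
        rw [Fin.val_succ, hs, hval1]
      rw [if_pos hs1, if_neg (by rw [Fin.val_succ]; omega : ¬((t.succ : Fin (r+1)).val = 0))]
      rw [Fin.val_succ, hs]
      simp only [Nat.add_zero, Nat.zero_add, Nat.add_sub_cancel]
      rw [if_neg (by omega : ¬(M ∣ 0 ∧ (0:ℕ) ≠ 0))]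
      ring
    · have hs1 : (s.succ : Fin (r+1)) ≠ 1 := by
        intro h
        have := congrArg Fin.val h
        rw [Fin.val_succ, hval1] at this
        omega
      rw [if_neg hs1, Fin.val_succ, Fin.val_succ]
      have e3 : M - 2 + (s.val + 1) = M - 1 + s.val := by omega
      rw [e3, hEntry_shift a (n+1) M hM s.val t.val (by omega)]
      have h4 := hEntry_rec M n a hM ha1 (s.val - 1) t.val
      rw [show s.val - 1 + 1 = s.val from by omega] at h4
      rw [h4]
      rw [Nat.zero_add, hEcoef s.val (by omega)]
  have hdetQ : (P'.submatrix Fin.succ Fin.succ).det = specialMinor b n M 1 r := by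
    rw [hQ]
    rw [det_rowops (fun i => fun u : Fin r => hEntry b n M i u)
      (fun i => if M ∣ i ∧ i ≠ 0 then c else 0) 0 ?_ ?_]
    · unfold specialMinor
      congr 1
    · intro s hsne
      by_contra hc
      have hs0 : s.val = 0 := by omega
      rw [hs0] at hsne
      rw [if_neg (by omega : ¬(M ∣ 0 + 0 ∧ 0 + (0:ℕ) ≠ 0))] at hsne
      exact hsne rfl
    · intro i hi
      by_cases h : M ∣ i ∧ i ≠ 0
      · rw [if_neg]
        intro ⟨hd2, hne2⟩
        have h1 : M ∣ (i - (i-1)) := Nat.dvd_sub h.1 hd2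
        have h2 : i - (i - 1) = 1 := by
          have := Nat.le_of_dvd (by omega) h.1
          omega
        rw [h2] at h1
        have := Nat.le_of_dvd (by norm_num) h1
        omega
      · rw [if_neg h] at hi
        exact absurd rfl hi
  calc specialMinor a (n+1) M (M-1) (r+1) = P0.det := rfl
    _ = P'.det := hdetP0
    _ = a 1 * (P'.submatrix Fin.succ Fin.succ).det := hdetP'
    _ = a 1 * specialMinor b n M 1 r := by rw [hdetQ]

lemma main_induction (M : ℕ) (hM : 2 ≤ M) :
    ∀ n (a : ℕ → ℝ), 0 < a 0 →
    (∀ k r : ℕ, 1 ≤ k → k ≤ M - 1 → 1 ≤ r →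
      (M-1)*(r-1) + (M-k) ≤ n → 0 < specialMinor a n M k r) →
    ((∀ (p : ℕ) (rows cols : Fin p → ℕ), StrictMono rows → StrictMono cols →
        0 ≤ Matrix.det (Matrix.of fun s t : Fin p => hEntry a n M (rows s) (cols t)))
     ∧ (∀ p ≤ n, 0 < a p)
     ∧ (∀ (p : ℕ) (rows cols : Fin p → ℕ), StrictMono rows → StrictMono cols →
        (∀ l : Fin p, 0 < hEntry a n M (rows l) (cols l)) →
        0 < Matrix.det (Matrix.of fun s t : Fin p => hEntry a n M (rows s) (cols t)))) := by
  intro n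
  induction n with
  | zero =>
    intro a ha0 _
    have hnz : ∀ i j : ℕ, hEntry a 0 M i j ≠ 0 → M * (j + 1) = i + 1 := by
      intro i j h
      by_contra hne
      apply h
      simp only [hEntry]
      rw [if_neg]
      omega
    have hpat : ∀ (p : ℕ) (rows cols : Fin p → ℕ), StrictMono rows → StrictMono cols →
        ∀ s t s' t' : Fin p, s < s' → t' < t →
        (Matrix.of fun u v : Fin p => hEntry a 0 M (rows u) (cols v)) s t ≠ 0 →
        (Matrix.of fun u v : Fin p => hEntry a 0 M (rows u) (cols v)) s' t' = 0 := by
      intro p rows cols hr hc s t s' t' hss htt hnz0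
      simp only [Matrix.of_apply] at hnz0 ⊢
      have h1 := hnz (rows s) (cols t) hnz0
      by_contra h2
      have h3 := hnz (rows s') (cols t') h2
      have h4 : cols t' + 1 ≤ cols t := by have := hc htt; omega
      have h5 : M * (cols t' + 1) ≤ M * (cols t) := Nat.mul_le_mul_left M h4
      have h6 : M * (cols t + 1) = M * (cols t) + M := by ring
      have h7 : rows s < rows s' := hr hss
      omega
    have hnn : ∀ i j : ℕ, 0 ≤ hEntry a 0 M i j := by
      intro i j
      simp only [hEntry]
      split_ifs with h
      · rw [show M * (j + 1) - (i + 1) = 0 from by omega]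
        exact ha0.le
      · exact le_refl 0
    refine ⟨?_, ?_, ?_⟩
    · intro p rows cols hr hc
      rw [det_eq_prod_diag _ (hpat p rows cols hr hc)]
      apply Finset.prod_nonneg
      intro s _
      exact hnn _ _
    · intro p hp
      rw [Nat.le_zero.mp hp]
      exact ha0
    · intro p rows cols hr hc hdiag
      rw [det_eq_prod_diag _ (hpat p rows cols hr hc)]
      apply Finset.prod_pos
      intro s _
      exact hdiag s
  | succ n ih =>
    intro a ha0 hdelta
    have hsm1 : specialMinor a (n+1) M (M-1) 1 = a 1 := by
      unfold specialMinor
      rw [Matrix.det_fin_one]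
      show hEntry a (n+1) M (M - 1 - 1 + ((0 : Fin 1) : ℕ)) ((0 : Fin 1) : ℕ) = a 1
      rw [show ((0 : Fin 1) : ℕ) = 0 from rfl]
      simp only [hEntry]
      rw [if_pos (by omega : M - 1 - 1 + 0 + 1 ≤ M * (0 + 1) ∧
        M * (0 + 1) - (M - 1 - 1 + 0 + 1) ≤ n + 1)]
      congr 1
      omega
    have ha1 : 0 < a 1 := by
      have h := hdelta (M-1) 1 (by omega) (le_refl _) (le_refl _) (by omega)
      rw [hsm1] at h
      exact h
    have ha1ne : a 1 ≠ 0 := ne_of_gt ha1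
    set b := bseq M (n+1) a with hbdef
    have hb0 : b 0 = a 1 := by
      rw [hbdef]
      unfold bseq
      rw [if_neg (by rw [Nat.mod_eq_of_lt (by omega)]; omega)]
      unfold aext
      rw [if_pos (by omega)]
    have hbdelta : ∀ k r : ℕ, 1 ≤ k → k ≤ M - 1 → 1 ≤ r →
        (M-1)*(r-1) + (M-k) ≤ n → 0 < specialMinor b n M k r := by
      intro k r hk1 hkM hr1 hple
      by_cases hk : k = 1
      · subst hk
        have hple' : (M-1)*((r+1)-1) + (M-(M-1)) ≤ n + 1 := by
          have e1 : (M-1)*((r+1)-1) = (M-1)*(r-1) + (M-1) := by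
            rw [show (r+1)-1 = (r-1)+1 from by omega]
            ring
          omega
        have hd := hdelta (M-1) (r+1) (by omega) (le_refl _) (by omega) hple'
        rw [drop_minor M n a hM ha1ne hr1] at hd
        rcases mul_pos_iff.mp hd with ⟨_, hx⟩ | ⟨hneg, _⟩
        · exact hx
        · linarith
      · have hnd : ¬ M ∣ (k - 1) := by
          intro h
          have := Nat.le_of_dvd (by omega) h
          omega
        have hple' : (M-1)*(r-1) + (M-(k-1)) ≤ n + 1 := by omega
        have hd := hdelta (k-1) r (by omega) (by omega) hr1 hple'
        rw [shift_minor M n a hM ha1ne (by omega) hnd r,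
          show k - 1 + 1 = k from by omega] at hd
        exact hd
    obtain ⟨ihTNN, ihpos, ihrev⟩ := ih b (by rw [hb0]; exact ha1) hbdelta
    have hcpos : (0:ℝ) < a 0 / a 1 := div_pos ha0 ha1
    -- part (b)
    have hposa : ∀ p ≤ n+1, 0 < a p := by
      have key : ∀ d p : ℕ, n + 1 - p = d → 1 ≤ p → p ≤ n + 1 → 0 < a p := by
        intro d
        induction d using Nat.strong_induction_on with
        | _ d ihd =>
          intro p hd h1 h2
          have hbpos : 0 < b (p-1) := ihpos (p-1) (by omega)
          by_cases hdv : M ∣ p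
          · have hb := bval_mod M (n+1) a hM hdv h1
            have haext : aext a (n+1) p = a p := by unfold aext; rw [if_pos h2]
            have hnext : 0 ≤ aext a (n+1) (p+1) := by
              unfold aext
              split_ifs with h
              · exact (ihd (n+1-(p+1)) (by omega) (p+1) rfl (by omega) h).le
              · exact le_refl 0
            rw [hbdef] at hbpos
            rw [hb, haext] at hbpos
            have hmul : 0 ≤ a 0 / a 1 * aext a (n+1) (p+1) := mul_nonneg hcpos.le hnext
            linarith
          · have hb := bval_nmod M (n+1) a hM (k := p-1)
              (by intro hcon; rw [show p - 1 + 1 = p from by omega] at hcon; exact hdv hcon)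
            rw [show p - 1 + 1 = p from by omega] at hb
            rw [hbdef, hb] at hbpos
            unfold aext at hbpos
            rw [if_pos h2] at hbpos
            exact hbpos
      intro p hp
      rcases Nat.eq_zero_or_pos p with h0 | h1
      · rw [h0]; exact ha0
      · exact key (n+1-p) p rfl h1 hp
    -- expansion setup
    set w : ℕ → ℝ := fun i => if M ∣ (i+1) then a 0 / a 1 else 0 with hwdef
    have hrec : ∀ i j, hEntry a (n+1) M i j =
        hEntry b n M (i+1) j + w i * hEntry b n M i j := by
      intro i j
      rw [hwdef]
      exact hEntry_rec M n a hM ha1ne i j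
    have hwnn : ∀ i, 0 ≤ w i := by
      intro i
      rw [hwdef]
      dsimp only
      split_ifs
      · exact hcpos.le
      · exact le_refl 0
    have hterm_nonneg : ∀ (p : ℕ) (rows cols : Fin p → ℕ), StrictMono rows → StrictMono cols →
        ∀ ε : Fin p → Bool, 0 ≤ (∏ s, (if ε s then w (rows s) else 1)) *
          Matrix.det (Matrix.of fun s t : Fin p =>
            hEntry b n M (if ε s then rows s else rows s + 1) (cols t)) := by
      intro p rows cols hr hc' ε
      by_cases hinj : Function.Injective (fun s => if ε s then rows s else rows s + 1)
      · have hsm : StrictMono (fun s => if ε s then rows s else rows s + 1) := by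
          intro s s' h
          refine lt_of_le_of_ne ?_ (fun he => (ne_of_lt h) (hinj he))
          have := hr h
          dsimp only
          split_ifs <;> omega
        apply mul_nonneg
        · apply Finset.prod_nonneg
          intro s _
          split_ifs
          · exact hwnn _
          · exact zero_le_one
        · exact ihTNN p _ cols hsm hc'
      · rw [Function.not_injective_iff] at hinj
        obtain ⟨s, s', heq, hne⟩ := hinj
        have heq' : (if ε s then rows s else rows s + 1) =
            (if ε s' then rows s' else rows s' + 1) := heq
        have hdet0 : Matrix.det (Matrix.of fun u t : Fin p =>
            hEntry b n M (if ε u then rows u else rows u + 1) (cols t)) = 0 := by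
          apply Matrix.det_zero_of_row_eq hne
          funext t
          simp only [Matrix.of_apply]
          rw [heq']
        rw [hdet0, mul_zero]
    refine ⟨?_, hposa, ?_⟩
    · intro p rows cols hr hc'
      rw [det_expand_rows (hEntry a (n+1) M) (hEntry b n M) w hrec rows cols]
      apply Finset.sum_nonneg
      intro ε _
      exact hterm_nonneg p rows cols hr hc' ε
    · intro p rows cols hr hc' hdiag
      have hguard : ∀ l : Fin p, rows l + 1 ≤ M * (cols l + 1) ∧
          M * (cols l + 1) - (rows l + 1) ≤ n + 1 := by
        intro l
        have h := hdiag l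
        by_contra hcon
        simp only [hEntry] at h
        rw [if_neg hcon] at h
        exact lt_irrefl 0 h
      rw [det_expand_rows (hEntry a (n+1) M) (hEntry b n M) w hrec rows cols]
      apply Finset.sum_pos'
      · intro ε _
        exact hterm_nonneg p rows cols hr hc' ε
      · refine ⟨fun s => decide (M * (cols s + 1) = rows s + 1), Finset.mem_univ _, ?_⟩
        simp only [decide_eq_true_eq]
        have hsm : StrictMono (fun s : Fin p =>
            if M * (cols s + 1) = rows s + 1 then rows s else rows s + 1) := by
          intro s s' hss
          have h1 := hr hss
          have h2 : cols s + 1 ≤ cols s' := by have := hc' hss; omega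
          have h3 := Nat.mul_le_mul_left M h2
          have h4 : M * (cols s' + 1) = M * (cols s') + M := by ring
          have h5 := (hguard s).1
          dsimp only
          by_cases es : M * (cols s + 1) = rows s + 1
          · rw [if_pos es]
            by_cases es' : M * (cols s' + 1) = rows s' + 1
            · rw [if_pos es']; omega
            · rw [if_neg es']; omega
          · rw [if_neg es]
            by_cases es' : M * (cols s' + 1) = rows s' + 1
            · rw [if_pos es']; omega
            · rw [if_neg es']; omega
        apply mul_pos
        · apply Finset.prod_pos
          intro s _
          by_cases es : M * (cols s + 1) = rows s + 1
          · rw [if_pos es, hwdef]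
            dsimp only
            have hdv : M ∣ rows s + 1 := Dvd.intro (cols s + 1) es
            rw [if_pos hdv]
            exact hcpos
          · rw [if_neg es]
            exact zero_lt_one
        · apply ihrev p _ cols hsm hc'
          intro l
          have hg := hguard l
          by_cases el : M * (cols l + 1) = rows l + 1
          · rw [if_pos el]
            simp only [hEntry]
            rw [if_pos (by omega : rows l + 1 ≤ M * (cols l + 1) ∧
              M * (cols l + 1) - (rows l + 1) ≤ n)]
            rw [show M * (cols l + 1) - (rows l + 1) = 0 from by omega, hb0]
            exact ha1
          · rw [if_neg el]
            simp only [hEntry]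
            rw [if_pos (by omega : rows l + 1 + 1 ≤ M * (cols l + 1) ∧
              M * (cols l + 1) - (rows l + 1 + 1) ≤ n)]
            exact ihpos _ (by omega)

/-- Goldman–Sun: if all `n` special minors `Δ_p = H_M(k,r)`, `p = (M-1)(r-1)+(M-k)`,
`p = 1, ..., n`, of the generalized Hurwitz matrix are positive, then (a) `H_M(f)` is
totally nonnegative, (b) all coefficients of `f` are positive, and (c) a minor of `H_M(f)`
is positive iff all its diagonal entries are positive. -/
theorem goldman_sun_special_minors
    (n M : ℕ) (a : ℕ → ℝ) (ha0 : 0 < a 0) (hM : 2 ≤ M) (hMn : M ≤ n)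
    (hdelta : ∀ k r : ℕ, 1 ≤ k → k ≤ M - 1 → 1 ≤ r →
      (M - 1) * (r - 1) + (M - k) ≤ n → 0 < specialMinor a n M k r) :
    IsTotallyNonneg (hEntry a n M) ∧
    (∀ p ≤ n, 0 < a p) ∧
    (∀ (p : ℕ) (rows cols : Fin p → ℕ), StrictMono rows → StrictMono cols →
      (0 < Matrix.det (Matrix.of fun s t : Fin p => hEntry a n M (rows s) (cols t)) ↔
        ∀ l : Fin p, 0 < hEntry a n M (rows l) (cols l))) := by
  obtain ⟨tnn, pos, rev⟩ := main_induction M hM n a ha0 hdelta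
  refine ⟨?_, pos, ?_⟩
  · intro p r c hr hc
    exact tnn p r c hr hc
  · intro p rows cols hr hc
    constructor
    · intro hdet l
      by_contra hng
      have hg : ¬(rows l + 1 ≤ M * (cols l + 1) ∧ M * (cols l + 1) - (rows l + 1) ≤ n) := by
        intro hgg
        apply hng
        simp only [hEntry]
        rw [if_pos hgg]
        exact pos _ hgg.2
      rcases Nat.lt_or_ge (M * (cols l + 1)) (rows l + 1) with hcase | hcase
      · have hz : ∀ s t : Fin p, l ≤ s → t ≤ l → hEntry a n M (rows s) (cols t) = 0 := by
          intro s t hs ht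
          have h1 : rows l ≤ rows s := hr.monotone hs
          have h2 : cols t + 1 ≤ cols l + 1 := by have := hc.monotone ht; omega
          have h3 : M * (cols t + 1) ≤ M * (cols l + 1) := Nat.mul_le_mul_left M h2
          simp only [hEntry]
          rw [if_neg]
          omega
        have hd0 : Matrix.det (Matrix.of fun s t : Fin p =>
            hEntry a n M (rows s) (cols t)) = 0 := by
          rw [← Matrix.det_transpose]
          apply det_eq_zero_of_block _ l
          intro s t hs ht
          rw [Matrix.transpose_apply, Matrix.of_apply]
          exact hz t s ht hs
        rw [hd0] at hdet
        exact lt_irrefl 0 hdet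
      · have hz : ∀ s t : Fin p, s ≤ l → l ≤ t → hEntry a n M (rows s) (cols t) = 0 := by
          intro s t hs ht
          have h1 : rows s + 1 ≤ rows l + 1 := by have := hr.monotone hs; omega
          have h2 : cols l + 1 ≤ cols t + 1 := by have := hc.monotone ht; omega
          have h3 : M * (cols l + 1) ≤ M * (cols t + 1) := Nat.mul_le_mul_left M h2
          have h4 : n < M * (cols l + 1) - (rows l + 1) := by omega
          simp only [hEntry]
          rw [if_neg]
          omega
        have hd0 : Matrix.det (Matrix.of fun s t : Fin p =>
            hEntry a n M (rows s) (cols t)) = 0 := by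
          apply det_eq_zero_of_block _ l
          intro s t hs ht
          exact hz s t hs ht
        rw [hd0] at hdet
        exact lt_irrefl 0 hdet
    · intro hdiag
      exact rev p rows cols hr hc hdiag
end
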